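/- arXiv:quant-ph/0612010 — 6 statements merged into one kernel-verified Lean document; each statement's English description precedes it below -/
import Mathlib

section
/- Let μ be a probability measure on a product measurable space Ω₁ × Ω₂ with marginals μ₁ and μ₂, and let ν₁, ν₂ be probability measures on Ω₁ and Ω₂ respectively. Then KL(μ ‖ ν₁ ⊗ ν₂) = KL(μ₁ ‖ ν₁) + KL(μ₂ ‖ ν₂) + KL(μ ‖ μ₁ ⊗ μ₂). In particular the term KL(μ ‖ μ₁ ⊗ μ₂), the relative entropy of a state with respect to the product of its marginals (the mutual entropy), is the excess of KL(μ ‖ ν₁ ⊗ ν₂) over the sum of the marginal relative entropies. -/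
open MeasureTheory
open scoped Classical

/-- Kullback–Leibler divergence (relative entropy) of `μ` with respect to `ν`:
`∫ log (dμ/dν) dμ` when `μ ≪ ν` and the integrand is integrable, `+∞` otherwise. -/
noncomputable def klDiv {Ω : Type*} [MeasurableSpace Ω] (μ ν : Measure Ω) : EReal :=
  if μ ≪ ν ∧ Integrable (fun ω => Real.log (μ.rnDeriv ν ω).toReal) μ
  then ((∫ ω, Real.log (μ.rnDeriv ν ω).toReal ∂μ : ℝ) : EReal)
  else ⊤

section KLAux

variable {Ω : Type*} [MeasurableSpace Ω]

private lemma klDiv_eq_top_of_not_ac {α β : Measure Ω} (h : ¬ α ≪ β) : klDiv α β = ⊤ :=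
  if_neg fun hc => h hc.1

private lemma klDiv_eq_top_of_not_int {α β : Measure Ω}
    (h : ¬ Integrable (fun ω => Real.log (α.rnDeriv β ω).toReal) α) : klDiv α β = ⊤ :=
  if_neg fun hc => h hc.2

private lemma klDiv_eq_integral {α β : Measure Ω} (h1 : α ≪ β)
    (h2 : Integrable (fun ω => Real.log (α.rnDeriv β ω).toReal) α) :
    klDiv α β = ((∫ ω, Real.log (α.rnDeriv β ω).toReal ∂α : ℝ) : EReal) :=
  if_pos ⟨h1, h2⟩

private lemma klDiv_ne_bot (α β : Measure Ω) : klDiv α β ≠ ⊥ := by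
  unfold klDiv; split <;> simp

/-- The negative part of the log of the Radon–Nikodym derivative is always integrable. -/
private lemma klAux_integrable_min (α β : Measure Ω) [IsFiniteMeasure α] [IsFiniteMeasure β]
    (h : α ≪ β) :
    Integrable (fun ω => min (Real.log (α.rnDeriv β ω).toReal) 0) α := by
  have hm : Measurable fun ω => min (Real.log (α.rnDeriv β ω).toReal) 0 :=
    (Real.measurable_log.comp (Measure.measurable_rnDeriv α β).ennreal_toReal).min
      measurable_const
  refine ⟨hm.aestronglyMeasurable, ?_⟩
  have hb : ∀ᵐ x ∂β,
      α.rnDeriv β x * (‖min (Real.log (α.rnDeriv β x).toReal) 0‖₊ : ENNReal) ≤ 1 := by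
    filter_upwards [Measure.rnDeriv_lt_top α β] with x hx
    set t := α.rnDeriv β x with ht
    set r := t.toReal with hr
    have hr0 : 0 ≤ r := ENNReal.toReal_nonneg
    by_cases h1 : 1 ≤ r
    · have hzero : min (Real.log r) 0 = 0 := min_eq_right (Real.log_nonneg h1)
      simp [hzero]
    · push_neg at h1
      have hlog : Real.log r ≤ 0 := Real.log_nonpos hr0 h1.le
      have hmin : min (Real.log r) 0 = Real.log r := min_eq_left hlog
      have hnn : (‖min (Real.log r) 0‖₊ : ENNReal) = ENNReal.ofReal (-Real.log r) := by
        rw [hmin, ← nnnorm_neg, ← enorm_eq_nnnorm, Real.enorm_eq_ofReal (by linarith)]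
      rw [hnn]
      rcases eq_or_lt_of_le hr0 with hr0' | hrpos
      · rw [← hr0', Real.log_zero]; simp
      · have htr : t = ENNReal.ofReal r := (ENNReal.ofReal_toReal hx.ne).symm
        rw [htr, ← ENNReal.ofReal_mul hr0]
        have hkey : r * -Real.log r ≤ 1 := by
          have h1' : Real.log r⁻¹ ≤ r⁻¹ - 1 := Real.log_le_sub_one_of_pos (by positivity)
          rw [Real.log_inv] at h1'
          have h2' : r * -Real.log r ≤ r * (r⁻¹ - 1) :=
            mul_le_mul_of_nonneg_left h1' hrpos.le
          have h3' : r * (r⁻¹ - 1) = 1 - r := by field_simp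
          linarith
        calc ENNReal.ofReal (r * -Real.log r) ≤ ENNReal.ofReal 1 :=
              ENNReal.ofReal_le_ofReal hkey
          _ = 1 := ENNReal.ofReal_one
  have key : ∫⁻ x, (‖min (Real.log (α.rnDeriv β x).toReal) 0‖₊ : ENNReal) ∂α ≤ β Set.univ := by
    rw [← MeasureTheory.lintegral_rnDeriv_mul h hm.nnnorm.coe_nnreal_ennreal.aemeasurable]
    calc ∫⁻ x, α.rnDeriv β x * (‖min (Real.log (α.rnDeriv β x).toReal) 0‖₊ : ENNReal) ∂β
        ≤ ∫⁻ _, 1 ∂β := lintegral_mono_ae hb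
      _ = β Set.univ := by simp
  exact lt_of_le_of_lt key (measure_lt_top β _)

/-- Extracting the integrability of one summand. -/
private lemma klAux_integrable_left {μ : Measure Ω}
    {L A B C : Ω → ℝ} (hA : AEStronglyMeasurable A μ)
    (heq : ∀ᵐ x ∂μ, L x = A x + B x + C x) (hL : Integrable L μ)
    (hAm : Integrable (fun x => min (A x) 0) μ)
    (hBm : Integrable (fun x => min (B x) 0) μ)
    (hCm : Integrable (fun x => min (C x) 0) μ) : Integrable A μ := by
  have hmax : Integrable (fun x => max (A x) 0) μ := by
    refine Integrable.mono' ((hL.abs.add hBm.neg).add hCm.neg)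
      (hA.sup aestronglyMeasurable_const) ?_
    filter_upwards [heq] with x hx
    rw [Real.norm_eq_abs, abs_of_nonneg (le_max_right _ _)]
    have h1 : min (B x) 0 ≤ B x := min_le_left _ _
    have h2 : min (C x) 0 ≤ C x := min_le_left _ _
    have h3 : min (B x) 0 ≤ 0 := min_le_right _ _
    have h4 : min (C x) 0 ≤ 0 := min_le_right _ _
    have h5 : L x ≤ |L x| := le_abs_self _
    rcases le_total (A x) 0 with h | h
    · rw [max_eq_right h]
      simp only [Pi.add_apply, Pi.neg_apply]
      have := abs_nonneg (L x); linarith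
    · rw [max_eq_left h]
      simp only [Pi.add_apply, Pi.neg_apply]
      linarith
  refine (hmax.add hAm).congr ?_
  filter_upwards with x
  simp only [Pi.add_apply]
  rw [add_comm, min_add_max, add_zero]

end KLAux

section KLAux2

variable {Ω₁ Ω₂ : Type*} [MeasurableSpace Ω₁] [MeasurableSpace Ω₂]

private lemma klAux_prod_withDensity (μ₁ ν₁ : Measure Ω₁) (μ₂ ν₂ : Measure Ω₂)
    [IsProbabilityMeasure μ₁] [IsProbabilityMeasure ν₁]
    [IsProbabilityMeasure μ₂] [IsProbabilityMeasure ν₂]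
    (h₁ : μ₁ ≪ ν₁) (h₂ : μ₂ ≪ ν₂) :
    μ₁.prod μ₂ = (ν₁.prod ν₂).withDensity
      (fun p => μ₁.rnDeriv ν₁ p.1 * μ₂.rnDeriv ν₂ p.2) :=
  Measure.prod_eq fun s t hs ht => by
    rw [withDensity_apply _ (hs.prod ht), ← Measure.prod_restrict,
      lintegral_prod_mul (Measure.measurable_rnDeriv μ₁ ν₁).aemeasurable
        (Measure.measurable_rnDeriv μ₂ ν₂).aemeasurable,
      Measure.setLIntegral_rnDeriv' h₁ hs, Measure.setLIntegral_rnDeriv' h₂ ht]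

private lemma klAux_rnDeriv_prod (μ₁ ν₁ : Measure Ω₁) (μ₂ ν₂ : Measure Ω₂)
    [IsProbabilityMeasure μ₁] [IsProbabilityMeasure ν₁]
    [IsProbabilityMeasure μ₂] [IsProbabilityMeasure ν₂]
    (h₁ : μ₁ ≪ ν₁) (h₂ : μ₂ ≪ ν₂) :
    (μ₁.prod μ₂).rnDeriv (ν₁.prod ν₂) =ᵐ[ν₁.prod ν₂]
      fun p => μ₁.rnDeriv ν₁ p.1 * μ₂.rnDeriv ν₂ p.2 := by
  rw [klAux_prod_withDensity μ₁ ν₁ μ₂ ν₂ h₁ h₂]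
  exact Measure.rnDeriv_withDensity _
    (((Measure.measurable_rnDeriv μ₁ ν₁).comp measurable_fst).mul
      ((Measure.measurable_rnDeriv μ₂ ν₂).comp measurable_snd))

end KLAux2

/-- `KL(μ ‖ ν₁ ⊗ ν₂) = KL(μ₁ ‖ ν₁) + KL(μ₂ ‖ ν₂) + KL(μ ‖ μ₁ ⊗ μ₂)`:
the mutual entropy `KL(μ ‖ μ₁ ⊗ μ₂)` of a state with respect to the product of its
marginals is the excess of `KL(μ ‖ ν₁ ⊗ ν₂)` over the sum of the marginal relative
entropies. -/
theorem klDiv_prod_decomposition_mutual {Ω₁ Ω₂ : Type*}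
    [MeasurableSpace Ω₁] [MeasurableSpace Ω₂]
    (μ : Measure (Ω₁ × Ω₂)) (ν₁ : Measure Ω₁) (ν₂ : Measure Ω₂)
    [IsProbabilityMeasure μ] [IsProbabilityMeasure ν₁] [IsProbabilityMeasure ν₂] :
    klDiv μ (ν₁.prod ν₂)
      = klDiv μ.fst ν₁ + klDiv μ.snd ν₂ + klDiv μ (μ.fst.prod μ.snd) := by
  by_cases hac : μ ≪ ν₁.prod ν₂
  swap
  · rw [klDiv_eq_top_of_not_ac hac]
    by_cases h1 : μ.fst ≪ ν₁
    · by_cases h2 : μ.snd ≪ ν₂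
      · have hμπ : ¬ μ ≪ μ.fst.prod μ.snd := fun h => hac (h.trans (h1.prod h2))
        rw [klDiv_eq_top_of_not_ac hμπ,
          EReal.add_top_of_ne_bot (by
            rw [Ne, EReal.add_eq_bot_iff]
            push_neg
            exact ⟨klDiv_ne_bot _ _, klDiv_ne_bot _ _⟩)]
      · rw [klDiv_eq_top_of_not_ac h2, EReal.add_top_of_ne_bot (klDiv_ne_bot _ _),
          EReal.top_add_of_ne_bot (klDiv_ne_bot _ _)]
    · rw [klDiv_eq_top_of_not_ac h1, EReal.top_add_of_ne_bot (klDiv_ne_bot _ _),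
        EReal.top_add_of_ne_bot (klDiv_ne_bot _ _)]
  · -- `μ ≪ ν₁.prod ν₂`
    have h1 : μ.fst ≪ ν₁ := by
      have h := hac.map measurable_fst
      have he : (ν₁.prod ν₂).map Prod.fst = ν₁ := by
        rw [Measure.map_fst_prod]; simp
      rwa [he] at h
    have h2 : μ.snd ≪ ν₂ := by
      have h := hac.map measurable_snd
      have he : (ν₁.prod ν₂).map Prod.snd = ν₂ := by
        rw [Measure.map_snd_prod]; simp
      rwa [he] at h
    have hπν : μ.fst.prod μ.snd ≪ ν₁.prod ν₂ := h1.prod h2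
    have hπd := klAux_rnDeriv_prod μ.fst ν₁ μ.snd ν₂ h1 h2
    have hg1posμ : ∀ᵐ p ∂μ, 0 < μ.fst.rnDeriv ν₁ p.1 :=
      (ae_map_iff measurable_fst.aemeasurable
        (measurableSet_lt measurable_const (Measure.measurable_rnDeriv _ _))).mp
        (Measure.rnDeriv_pos h1)
    have hg2posμ : ∀ᵐ p ∂μ, 0 < μ.snd.rnDeriv ν₂ p.2 :=
      (ae_map_iff measurable_snd.aemeasurable
        (measurableSet_lt measurable_const (Measure.measurable_rnDeriv _ _))).mp
        (Measure.rnDeriv_pos h2)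
    have hg1finμ : ∀ᵐ p ∂μ, μ.fst.rnDeriv ν₁ p.1 < ⊤ :=
      (ae_map_iff measurable_fst.aemeasurable
        (measurableSet_lt (Measure.measurable_rnDeriv _ _) measurable_const)).mp
        (h1.ae_le (Measure.rnDeriv_lt_top μ.fst ν₁))
    have hg2finμ : ∀ᵐ p ∂μ, μ.snd.rnDeriv ν₂ p.2 < ⊤ :=
      (ae_map_iff measurable_snd.aemeasurable
        (measurableSet_lt (Measure.measurable_rnDeriv _ _) measurable_const)).mp
        (h2.ae_le (Measure.rnDeriv_lt_top μ.snd ν₂))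
    have hg10 : μ {p : Ω₁ × Ω₂ | μ.fst.rnDeriv ν₁ p.1 = 0} = 0 := by
      refine measure_mono_null ?_ (ae_iff.mp hg1posμ)
      intro p hp0
      simp only [Set.mem_setOf_eq] at hp0 ⊢
      simp [hp0]
    have hg20 : μ {p : Ω₁ × Ω₂ | μ.snd.rnDeriv ν₂ p.2 = 0} = 0 := by
      refine measure_mono_null ?_ (ae_iff.mp hg2posμ)
      intro p hp0
      simp only [Set.mem_setOf_eq] at hp0 ⊢
      simp [hp0]
    have hμπ : μ ≪ μ.fst.prod μ.snd := by
      have hh : Measurable fun p : Ω₁ × Ω₂ => μ.fst.rnDeriv ν₁ p.1 * μ.snd.rnDeriv ν₂ p.2 :=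
        ((Measure.measurable_rnDeriv _ _).comp measurable_fst).mul
          ((Measure.measurable_rnDeriv _ _).comp measurable_snd)
      refine Measure.AbsolutelyContinuous.mk fun A hA h0 => ?_
      rw [klAux_prod_withDensity μ.fst ν₁ μ.snd ν₂ h1 h2, withDensity_apply _ hA,
        lintegral_eq_zero_iff hh] at h0
      have h0' : ∀ᵐ p ∂(ν₁.prod ν₂),
          p ∈ A → μ.fst.rnDeriv ν₁ p.1 * μ.snd.rnDeriv ν₂ p.2 = 0 :=
        (ae_restrict_iff' hA).mp h0
      have hνA : μ ({p : Ω₁ × Ω₂ | μ.fst.rnDeriv ν₁ p.1 * μ.snd.rnDeriv ν₂ p.2 ≠ 0} ∩ A)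
          = 0 := by
        refine hac (measure_mono_null ?_ (ae_iff.mp h0'))
        rintro p ⟨hne, hmem⟩
        simp only [Set.mem_setOf_eq]
        exact fun h => hne (h hmem)
      have hsub : A ⊆ ({p : Ω₁ × Ω₂ | μ.fst.rnDeriv ν₁ p.1 * μ.snd.rnDeriv ν₂ p.2 ≠ 0} ∩ A)
          ∪ ({p : Ω₁ × Ω₂ | μ.fst.rnDeriv ν₁ p.1 = 0}
            ∪ {p : Ω₁ × Ω₂ | μ.snd.rnDeriv ν₂ p.2 = 0}) := by
        intro p hp
        by_cases hh0 : μ.fst.rnDeriv ν₁ p.1 * μ.snd.rnDeriv ν₂ p.2 = 0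
        · rcases mul_eq_zero.mp hh0 with h | h
          · exact Or.inr (Or.inl h)
          · exact Or.inr (Or.inr h)
        · exact Or.inl ⟨hh0, hp⟩
      exact measure_mono_null hsub
        (measure_union_null hνA (measure_union_null hg10 hg20))
    have hchain : ∀ᵐ p ∂μ, μ.rnDeriv (ν₁.prod ν₂) p
        = μ.rnDeriv (μ.fst.prod μ.snd) p * (μ.fst.rnDeriv ν₁ p.1 * μ.snd.rnDeriv ν₂ p.2) := by
      have hc := Measure.rnDeriv_mul_rnDeriv' (μ := μ) hπν
      filter_upwards [hμπ.ae_le hc, hac.ae_le hπd] with p hcp hdp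
      rw [← hcp, Pi.mul_apply, hdp]
    have hcpos := Measure.rnDeriv_pos hμπ
    have hcfin := hμπ.ae_le (Measure.rnDeriv_lt_top μ (μ.fst.prod μ.snd))
    have hlog : ∀ᵐ p ∂μ, Real.log (μ.rnDeriv (ν₁.prod ν₂) p).toReal
        = Real.log (μ.fst.rnDeriv ν₁ p.1).toReal + Real.log (μ.snd.rnDeriv ν₂ p.2).toReal
          + Real.log (μ.rnDeriv (μ.fst.prod μ.snd) p).toReal := by
      filter_upwards [hchain, hcpos, hcfin, hg1posμ, hg1finμ, hg2posμ, hg2finμ]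
        with p he hcp hcf h1p h1f h2p h2f
      have t1 : (μ.rnDeriv (μ.fst.prod μ.snd) p).toReal ≠ 0 :=
        (ENNReal.toReal_pos hcp.ne' hcf.ne).ne'
      have t2 : (μ.fst.rnDeriv ν₁ p.1).toReal ≠ 0 := (ENNReal.toReal_pos h1p.ne' h1f.ne).ne'
      have t3 : (μ.snd.rnDeriv ν₂ p.2).toReal ≠ 0 := (ENNReal.toReal_pos h2p.ne' h2f.ne).ne'
      rw [he, ENNReal.toReal_mul, ENNReal.toReal_mul, Real.log_mul t1 (mul_ne_zero t2 t3),
        Real.log_mul t2 t3]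
      ring
    have hmg1 : Measurable fun x => Real.log (μ.fst.rnDeriv ν₁ x).toReal :=
      Real.measurable_log.comp (Measure.measurable_rnDeriv _ _).ennreal_toReal
    have hmg2 : Measurable fun x => Real.log (μ.snd.rnDeriv ν₂ x).toReal :=
      Real.measurable_log.comp (Measure.measurable_rnDeriv _ _).ennreal_toReal
    have hiffA : Integrable (fun p : Ω₁ × Ω₂ => Real.log (μ.fst.rnDeriv ν₁ p.1).toReal) μ
        ↔ Integrable (fun x => Real.log (μ.fst.rnDeriv ν₁ x).toReal) μ.fst :=
      (integrable_map_measure hmg1.aestronglyMeasurable measurable_fst.aemeasurable).symm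
    have hiffB : Integrable (fun p : Ω₁ × Ω₂ => Real.log (μ.snd.rnDeriv ν₂ p.2).toReal) μ
        ↔ Integrable (fun x => Real.log (μ.snd.rnDeriv ν₂ x).toReal) μ.snd :=
      (integrable_map_measure hmg2.aestronglyMeasurable measurable_snd.aemeasurable).symm
    have hminA : Integrable
        (fun p : Ω₁ × Ω₂ => min (Real.log (μ.fst.rnDeriv ν₁ p.1).toReal) 0) μ :=
      (integrable_map_measure (hmg1.min measurable_const).aestronglyMeasurable
        measurable_fst.aemeasurable).mp (klAux_integrable_min μ.fst ν₁ h1)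
    have hminB : Integrable
        (fun p : Ω₁ × Ω₂ => min (Real.log (μ.snd.rnDeriv ν₂ p.2).toReal) 0) μ :=
      (integrable_map_measure (hmg2.min measurable_const).aestronglyMeasurable
        measurable_snd.aemeasurable).mp (klAux_integrable_min μ.snd ν₂ h2)
    have hminC : Integrable
        (fun p => min (Real.log (μ.rnDeriv (μ.fst.prod μ.snd) p).toReal) 0) μ :=
      klAux_integrable_min μ (μ.fst.prod μ.snd) hμπ
    have hiff : Integrable (fun p => Real.log (μ.rnDeriv (ν₁.prod ν₂) p).toReal) μ
        ↔ Integrable (fun p : Ω₁ × Ω₂ => Real.log (μ.fst.rnDeriv ν₁ p.1).toReal) μ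
          ∧ Integrable (fun p : Ω₁ × Ω₂ => Real.log (μ.snd.rnDeriv ν₂ p.2).toReal) μ
          ∧ Integrable (fun p => Real.log (μ.rnDeriv (μ.fst.prod μ.snd) p).toReal) μ := by
      constructor
      · intro hL
        refine ⟨klAux_integrable_left (hmg1.comp measurable_fst).aestronglyMeasurable
            hlog hL hminA hminB hminC,
          klAux_integrable_left (hmg2.comp measurable_snd).aestronglyMeasurable
            ?_ hL hminB hminA hminC,
          klAux_integrable_left (Real.measurable_log.comp
            (Measure.measurable_rnDeriv _ _).ennreal_toReal).aestronglyMeasurable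
            ?_ hL hminC hminA hminB⟩
        · filter_upwards [hlog] with p hp; linarith
        · filter_upwards [hlog] with p hp; linarith
      · rintro ⟨ha, hb, hc⟩
        refine ((ha.add hb).add hc).congr ?_
        filter_upwards [hlog] with p hp
        simp only [Pi.add_apply]
        exact hp.symm
    by_cases hint : Integrable (fun p => Real.log (μ.rnDeriv (ν₁.prod ν₂) p).toReal) μ
    · obtain ⟨ha, hb, hc⟩ := hiff.mp hint
      rw [klDiv_eq_integral hac hint, klDiv_eq_integral h1 (hiffA.mp ha),
        klDiv_eq_integral h2 (hiffB.mp hb), klDiv_eq_integral hμπ hc,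
        ← EReal.coe_add, ← EReal.coe_add, EReal.coe_eq_coe_iff]
      have e1 : ∫ x, Real.log (μ.fst.rnDeriv ν₁ x).toReal ∂μ.fst
          = ∫ p, Real.log (μ.fst.rnDeriv ν₁ p.1).toReal ∂μ :=
        integral_map measurable_fst.aemeasurable hmg1.aestronglyMeasurable
      have e2 : ∫ x, Real.log (μ.snd.rnDeriv ν₂ x).toReal ∂μ.snd
          = ∫ p, Real.log (μ.snd.rnDeriv ν₂ p.2).toReal ∂μ :=
        integral_map measurable_snd.aemeasurable hmg2.aestronglyMeasurable
      rw [e1, e2, integral_congr_ae hlog]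
      have step : ∫ p, ((Real.log (μ.fst.rnDeriv ν₁ p.1).toReal
            + Real.log (μ.snd.rnDeriv ν₂ p.2).toReal)
            + Real.log (μ.rnDeriv (μ.fst.prod μ.snd) p).toReal) ∂μ
          = ((∫ p, Real.log (μ.fst.rnDeriv ν₁ p.1).toReal ∂μ)
            + ∫ p, Real.log (μ.snd.rnDeriv ν₂ p.2).toReal ∂μ)
            + ∫ p, Real.log (μ.rnDeriv (μ.fst.prod μ.snd) p).toReal ∂μ := by
        have hABC : ∫ p, ((Real.log (μ.fst.rnDeriv ν₁ p.1).toReal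
              + Real.log (μ.snd.rnDeriv ν₂ p.2).toReal)
              + Real.log (μ.rnDeriv (μ.fst.prod μ.snd) p).toReal) ∂μ
            = (∫ p, (Real.log (μ.fst.rnDeriv ν₁ p.1).toReal
              + Real.log (μ.snd.rnDeriv ν₂ p.2).toReal) ∂μ)
              + ∫ p, Real.log (μ.rnDeriv (μ.fst.prod μ.snd) p).toReal ∂μ :=
          integral_add (ha.add hb) hc
        have hAB : ∫ p, (Real.log (μ.fst.rnDeriv ν₁ p.1).toReal
              + Real.log (μ.snd.rnDeriv ν₂ p.2).toReal) ∂μ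
            = (∫ p, Real.log (μ.fst.rnDeriv ν₁ p.1).toReal ∂μ)
              + ∫ p, Real.log (μ.snd.rnDeriv ν₂ p.2).toReal ∂μ :=
          integral_add ha hb
        rw [hABC, hAB]
      exact step
    · have hnot : ¬ (Integrable (fun p : Ω₁ × Ω₂ => Real.log (μ.fst.rnDeriv ν₁ p.1).toReal) μ
          ∧ Integrable (fun p : Ω₁ × Ω₂ => Real.log (μ.snd.rnDeriv ν₂ p.2).toReal) μ
          ∧ Integrable (fun p => Real.log (μ.rnDeriv (μ.fst.prod μ.snd) p).toReal) μ) :=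
        fun hcon => hint (hiff.mpr hcon)
      rw [klDiv_eq_top_of_not_int hint]
      by_cases ha : Integrable (fun p : Ω₁ × Ω₂ => Real.log (μ.fst.rnDeriv ν₁ p.1).toReal) μ
      · by_cases hb : Integrable (fun p : Ω₁ × Ω₂ => Real.log (μ.snd.rnDeriv ν₂ p.2).toReal) μ
        · have hc : ¬ Integrable
              (fun p => Real.log (μ.rnDeriv (μ.fst.prod μ.snd) p).toReal) μ :=
            fun hc => hnot ⟨ha, hb, hc⟩
          rw [klDiv_eq_top_of_not_int hc, EReal.add_top_of_ne_bot (by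
            rw [Ne, EReal.add_eq_bot_iff]
            push_neg
            exact ⟨klDiv_ne_bot _ _, klDiv_ne_bot _ _⟩)]
        · rw [klDiv_eq_top_of_not_int (fun h => hb (hiffB.mpr h)),
            EReal.add_top_of_ne_bot (klDiv_ne_bot _ _),
            EReal.top_add_of_ne_bot (klDiv_ne_bot _ _)]
      · rw [klDiv_eq_top_of_not_int (fun h => ha (hiffA.mpr h)),
          EReal.top_add_of_ne_bot (klDiv_ne_bot _ _),
          EReal.top_add_of_ne_bot (klDiv_ne_bot _ _)]
end

section
/- Let μ and ν be probability measures on a measurable space Ω₁ and let κ be a Markov kernel from Ω₁ to a measurable space Ω₂. Then KL(μ.bind κ ‖ ν.bind κ) ≤ KL(μ ‖ ν), i.e. relative entropy does not increase under the action of a channel (Markov kernel). -/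
open MeasureTheory
open scoped Classical

open ProbabilityTheory in
lemma aux_isProb_bind {Ω₁ Ω₂ : Type*} [MeasurableSpace Ω₁] [MeasurableSpace Ω₂]
    (μ : Measure Ω₁) [IsProbabilityMeasure μ] (κ : Kernel Ω₁ Ω₂) [IsMarkovKernel κ] :
    IsProbabilityMeasure (μ.bind κ) := by
  constructor
  rw [Measure.bind_apply MeasurableSet.univ κ.measurable.aemeasurable]
  simp

/-- the negative part of the log-likelihood ratio is integrable (for probability measures). -/
lemma aux_neg_llr_integrable {Ω : Type*} [MeasurableSpace Ω] (α β : Measure Ω)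
    [IsProbabilityMeasure α] [IsProbabilityMeasure β] (h : α ≪ β) :
    Integrable (fun x => max (- llr α β x) 0) α := by
  refine ⟨((measurable_llr α β).neg.max measurable_const).aestronglyMeasurable, ?_⟩
  rw [hasFiniteIntegral_iff_norm]
  have h_eq : ∀ x : Ω, ENNReal.ofReal ‖max (- llr α β x) 0‖ =
      ENNReal.ofReal (max (- llr α β x) 0) := by
    intro x
    rw [Real.norm_of_nonneg (le_max_right _ _)]
  simp_rw [h_eq]
  have hmeas : AEMeasurable (fun x => ENNReal.ofReal (max (- llr α β x) 0)) β :=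
    ((measurable_llr α β).neg.max measurable_const).ennreal_ofReal.aemeasurable
  rw [← MeasureTheory.lintegral_rnDeriv_mul h hmeas]
  have hb : ∀ᵐ x ∂β, α.rnDeriv β x * ENNReal.ofReal (max (- llr α β x) 0) ≤ 1 := by
    filter_upwards [Measure.rnDeriv_lt_top α β] with x hx
    set t := α.rnDeriv β x with ht
    by_cases h0 : t = 0
    · simp [h0]
    · have hr : 0 < t.toReal := ENNReal.toReal_pos h0 hx.ne
      have hlog : max (- llr α β x) 0 ≤ t.toReal⁻¹ := by
        refine max_le ?_ (by positivity)
        rw [llr, ← Real.log_inv]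
        calc Real.log t.toReal⁻¹ ≤ t.toReal⁻¹ - 1 :=
              Real.log_le_sub_one_of_pos (by positivity)
          _ ≤ t.toReal⁻¹ := by linarith
      calc t * ENNReal.ofReal (max (- llr α β x) 0)
          ≤ ENNReal.ofReal t.toReal * ENNReal.ofReal t.toReal⁻¹ := by
            rw [ENNReal.ofReal_toReal hx.ne]
            exact mul_le_mul_right (ENNReal.ofReal_le_ofReal hlog) _
        _ = ENNReal.ofReal (t.toReal * t.toReal⁻¹) := (ENNReal.ofReal_mul hr.le).symm
        _ ≤ 1 := by rw [mul_inv_cancel₀ hr.ne']; simp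
  calc ∫⁻ x, α.rnDeriv β x * ENNReal.ofReal (max (- llr α β x) 0) ∂β
      ≤ ∫⁻ _, 1 ∂β := lintegral_mono_ae hb
    _ = 1 := by simp
    _ < ⊤ := by simp

open ProbabilityTheory in
lemma aux_snd_compProd {Ω₁ Ω₂ : Type*} [MeasurableSpace Ω₁] [MeasurableSpace Ω₂]
    (μ : Measure Ω₁) [SFinite μ] (κ : Kernel Ω₁ Ω₂) [IsSFiniteKernel κ] :
    (μ ⊗ₘ κ).snd = μ.bind κ := by
  ext s hs
  rw [Measure.snd_apply hs, Measure.compProd_apply (measurable_snd hs),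
    Measure.bind_apply hs κ.measurable.aemeasurable]
  simp [Set.preimage_preimage]

/-- Uhlmann monotonicity (classical case): relative entropy does not increase under the
action of a channel (Markov kernel): `KL(μ ∘ κ ‖ ν ∘ κ) ≤ KL(μ ‖ ν)`. -/
theorem klDiv_bind_le {Ω₁ Ω₂ : Type*} [MeasurableSpace Ω₁] [MeasurableSpace Ω₂]
    (μ ν : Measure Ω₁) [IsProbabilityMeasure μ] [IsProbabilityMeasure ν]
    (κ : ProbabilityTheory.Kernel Ω₁ Ω₂) [ProbabilityTheory.IsMarkovKernel κ] :
    klDiv (μ.bind κ) (ν.bind κ) ≤ klDiv μ ν := by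
  by_cases hKL : μ ≪ ν ∧ Integrable (fun ω => Real.log (μ.rnDeriv ν ω).toReal) μ
  swap
  · simp only [klDiv]
    rw [if_neg hKL]
    exact le_top
  obtain ⟨hμν, hint⟩ := hKL
  have hint' : Integrable (llr μ ν) μ := hint
  set α := μ.bind κ with hα
  set β := ν.bind κ with hβ
  haveI : IsProbabilityMeasure α := aux_isProb_bind μ κ
  haveI : IsProbabilityMeasure β := aux_isProb_bind ν κ
  -- absolute continuity of the bound measures
  have hαβ : α ≪ β := by
    refine Measure.AbsolutelyContinuous.mk fun s hs hs0 => ?_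
    rw [Measure.bind_apply hs κ.measurable.aemeasurable] at hs0 ⊢
    rw [lintegral_eq_zero_iff (κ.measurable_coe hs)] at hs0 ⊢
    exact hμν.ae_eq hs0
  set P := μ.compProd κ with hP
  -- transfer along `fst` and `snd`
  have h_fst : P.map Prod.fst = μ := Measure.fst_compProd μ κ
  have h_snd : P.map Prod.snd = α := aux_snd_compProd μ κ
  set f : Ω₁ → ℝ := fun a => (μ.rnDeriv ν a).toReal with hf
  set g : Ω₂ → ℝ := fun b => (α.rnDeriv β b).toReal with hg
  set A : Ω₁ × Ω₂ → ℝ := fun p => Real.log (f p.1) with hA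
  set B : Ω₁ × Ω₂ → ℝ := fun p => Real.log (g p.2) with hB
  have hmf : Measurable f := (Measure.measurable_rnDeriv μ ν).ennreal_toReal
  have hmg : Measurable g := (Measure.measurable_rnDeriv α β).ennreal_toReal
  have hmA : Measurable A := (hmf.comp measurable_fst).log
  have hmB : Measurable B := (hmg.comp measurable_snd).log
  -- integrability of A with respect to P
  have hintA : Integrable A P := by
    have := (integrable_map_measure (μ := P) (f := Prod.fst) (g := llr μ ν)
      ((measurable_llr μ ν).aestronglyMeasurable) measurable_fst.aemeasurable)
    rw [h_fst] at this
    exact this.mp hint'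
  have hintA_eq : ∫ p, A p ∂P = ∫ a, llr μ ν a ∂μ := by
    have := integral_map (μ := P) (φ := Prod.fst) (f := llr μ ν) measurable_fst.aemeasurable
      (by rw [h_fst]; exact (measurable_llr μ ν).aestronglyMeasurable)
    rw [h_fst] at this
    exact this.symm
  -- the ratio function u
  set u : Ω₁ × Ω₂ → ℝ := fun p => g p.2 / f p.1 with hu
  have hmu : Measurable u := (hmg.comp measurable_snd).div (hmf.comp measurable_fst)
  have hu_nonneg : ∀ p, 0 ≤ u p := fun p => div_nonneg ENNReal.toReal_nonneg ENNReal.toReal_nonneg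
  -- key lintegral bound: ∫⁻ u dP ≤ 1
  have h_lint_u : ∫⁻ p, ENNReal.ofReal (u p) ∂P ≤ 1 := by
    rw [Measure.lintegral_compProd hmu.ennreal_ofReal]
    calc ∫⁻ a, ∫⁻ b, ENNReal.ofReal (u (a, b)) ∂(κ a) ∂μ
        = ∫⁻ a, μ.rnDeriv ν a * ∫⁻ b, ENNReal.ofReal (u (a, b)) ∂(κ a) ∂ν := by
          rw [MeasureTheory.lintegral_rnDeriv_mul hμν]
          exact (Measurable.lintegral_kernel_prod_right' hmu.ennreal_ofReal).aemeasurable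
      _ ≤ ∫⁻ a, ∫⁻ b, ENNReal.ofReal (g b) ∂(κ a) ∂ν := by
          refine lintegral_mono_ae ?_
          filter_upwards [Measure.rnDeriv_lt_top μ ν] with a ha
          by_cases h0 : μ.rnDeriv ν a = 0
          · simp [h0]
          · have hfa : 0 < f a := ENNReal.toReal_pos h0 ha.ne
            have hfa' : μ.rnDeriv ν a = ENNReal.ofReal (f a) := (ENNReal.ofReal_toReal ha.ne).symm
            have hmub : Measurable fun b => ENNReal.ofReal (u (a, b)) :=
              (hmu.comp measurable_prodMk_left).ennreal_ofReal
            calc μ.rnDeriv ν a * ∫⁻ b, ENNReal.ofReal (u (a, b)) ∂(κ a)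
                = ∫⁻ b, μ.rnDeriv ν a * ENNReal.ofReal (u (a, b)) ∂(κ a) :=
                  (lintegral_const_mul _ hmub).symm
              _ = ∫⁻ b, ENNReal.ofReal (g b) ∂(κ a) := by
                  refine lintegral_congr fun b => ?_
                  rw [show u (a, b) = g b / f a from rfl, ENNReal.ofReal_div_of_pos hfa, hfa',
                    ENNReal.mul_div_cancel (ENNReal.ofReal_pos.mpr hfa).ne' ENNReal.ofReal_ne_top]
              _ ≤ ∫⁻ b, ENNReal.ofReal (g b) ∂(κ a) := le_rfl
      _ ≤ ∫⁻ a, ∫⁻ b, α.rnDeriv β b ∂(κ a) ∂ν := by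
          refine lintegral_mono fun a => lintegral_mono fun b => ?_
          exact ENNReal.ofReal_toReal_le
      _ = ∫⁻ b, α.rnDeriv β b ∂β := by
          rw [hβ, Measure.lintegral_bind κ.measurable.aemeasurable (Measure.measurable_rnDeriv α β).aemeasurable]
      _ ≤ α Set.univ := Measure.lintegral_rnDeriv_le
      _ = 1 := measure_univ
  have hint_u : Integrable u P := by
    refine ⟨hmu.aestronglyMeasurable, ?_⟩
    rw [hasFiniteIntegral_iff_norm]
    have : ∀ p, ENNReal.ofReal ‖u p‖ = ENNReal.ofReal (u p) := fun p => by
      rw [Real.norm_of_nonneg (hu_nonneg p)]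
    simp_rw [this]
    exact lt_of_le_of_lt h_lint_u (by simp)
  have hint_u_le : ∫ p, u p ∂P ≤ 1 := by
    rw [integral_eq_lintegral_of_nonneg_ae (Filter.Eventually.of_forall hu_nonneg)
      hmu.aestronglyMeasurable]
    calc (∫⁻ p, ENNReal.ofReal (u p) ∂P).toReal ≤ (1 : ENNReal).toReal :=
          ENNReal.toReal_mono (by simp) h_lint_u
      _ = 1 := by simp
  -- a.e. facts
  have hae_f : ∀ᵐ p ∂P, 0 < f p.1 := by
    have h1 : ∀ᵐ a ∂μ, 0 < f a := by
      filter_upwards [Measure.rnDeriv_pos hμν, hμν.ae_le (Measure.rnDeriv_lt_top μ ν)]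
        with a h1 h2 using ENNReal.toReal_pos h1.ne' h2.ne
    exact ae_of_ae_map measurable_fst.aemeasurable (h_fst ▸ h1 : ∀ᵐ a ∂(P.map Prod.fst), 0 < f a)
  have hae_g : ∀ᵐ p ∂P, 0 < g p.2 := by
    have h1 : ∀ᵐ b ∂α, 0 < g b := by
      filter_upwards [Measure.rnDeriv_pos hαβ, hαβ.ae_le (Measure.rnDeriv_lt_top α β)]
        with b h1 h2 using ENNReal.toReal_pos h1.ne' h2.ne
    exact ae_of_ae_map measurable_snd.aemeasurable (h_snd ▸ h1 : ∀ᵐ b ∂(P.map Prod.snd), 0 < g b)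
  -- key pointwise inequality
  have hkey : ∀ᵐ p ∂P, B p ≤ A p + (u p - 1) := by
    filter_upwards [hae_f, hae_g] with p hfp hgp
    have hdiv : 0 < u p := div_pos hgp hfp
    have : Real.log (u p) ≤ u p - 1 := Real.log_le_sub_one_of_pos hdiv
    rw [hu] at this
    rw [Real.log_div hgp.ne' hfp.ne'] at this
    simp only [hA, hB]
    linarith
  -- integrability of B
  set N : Ω₁ × Ω₂ → ℝ := fun p => max (- llr α β p.2) 0 with hN
  have hintN : Integrable N P := by
    have := (integrable_map_measure (μ := P) (f := Prod.snd) (g := fun b => max (- llr α β b) 0)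
      (((measurable_llr α β).neg.max measurable_const).aestronglyMeasurable)
      measurable_snd.aemeasurable)
    rw [h_snd] at this
    exact this.mp (aux_neg_llr_integrable α β hαβ)
  have hintB : Integrable B P := by
    refine Integrable.mono' ((hintA.add hint_u).norm.add hintN) hmB.aestronglyMeasurable ?_
    filter_upwards [hkey] with p hp
    simp only [Pi.add_apply, Pi.sub_apply]
    rw [Real.norm_eq_abs, abs_le]
    constructor
    · have h1 : - N p ≤ B p := by
        have : - B p ≤ N p := le_max_left _ _
        linarith [neg_le.mp this]
      have h2 : 0 ≤ ‖A p + u p‖ := norm_nonneg _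
      linarith
    · have h1 : B p ≤ A p + u p := by have := hu_nonneg p; linarith
      have h2 : A p + u p ≤ ‖A p + u p‖ := le_abs_self _
      have h3 : 0 ≤ N p := le_max_right _ _
      linarith
  -- conclude integrability of llr α β w.r.t. α
  have hint_llr_αβ : Integrable (llr α β) α := by
    have := (integrable_map_measure (μ := P) (f := Prod.snd) (g := llr α β)
      ((measurable_llr α β).aestronglyMeasurable) measurable_snd.aemeasurable)
    rw [h_snd] at this
    exact this.mpr hintB
  have hintB_eq : ∫ p, B p ∂P = ∫ b, llr α β b ∂α := by
    have := integral_map (μ := P) (φ := Prod.snd) (f := llr α β) measurable_snd.aemeasurable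
      (by rw [h_snd]; exact (measurable_llr α β).aestronglyMeasurable)
    rw [h_snd] at this
    exact this.symm
  -- final integral inequality
  have hfinal : ∫ b, llr α β b ∂α ≤ ∫ a, llr μ ν a ∂μ := by
    rw [← hintA_eq, ← hintB_eq]
    calc ∫ p, B p ∂P ≤ ∫ p, (A p + (u p - 1)) ∂P :=
          integral_mono_ae hintB (hintA.add (hint_u.sub (integrable_const 1))) hkey
      _ = ∫ p, A p ∂P + (∫ p, u p ∂P - 1) := by
          have hsub : Integrable (fun p => u p - 1) P := hint_u.sub (integrable_const 1)
          have h4 : ∫ p, (A p + (u p - 1)) ∂P = ∫ p, A p ∂P + ∫ p, (u p - 1) ∂P :=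
            integral_add hintA hsub
          have h5 : ∫ p, (u p - 1) ∂P = ∫ p, u p ∂P - ∫ (_ : Ω₁ × Ω₂), (1 : ℝ) ∂P :=
            integral_sub hint_u (integrable_const 1)
          rw [h4, h5]
          simp [measure_univ]
      _ ≤ ∫ p, A p ∂P := by linarith
  -- wrap up
  simp only [klDiv]
  rw [if_pos ⟨hαβ, hint_llr_αβ⟩, if_pos ⟨hμν, hint⟩]
  exact_mod_cast EReal.coe_le_coe_iff.mpr hfinal
end

section
/- Let A be a positive definite Hermitian matrix in Matrix (Fin d) (Fin d) ℂ. Then its functional-calculus logarithm has the integral representation log A = ∫₀^∞ ( (1+t)⁻¹ • 1 − (t • 1 + A)⁻¹ ) dt, where 1 denotes the identity matrix, the inverse is the matrix inverse, and the integral is a Bochner integral of matrix-valued functions over (0, ∞). -/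
open Matrix MeasureTheory Set Filter
open scoped Classical ComplexOrder Topology

variable {d : ℕ}


-- scalar FTC computations
lemma scalar_hasDeriv {l : ℝ} (hl : 0 < l) {t : ℝ} (ht : 0 ≤ t) :
    HasDerivAt (fun s : ℝ => Real.log (1 + s) - Real.log (s + l))
      ((1 + t)⁻¹ - (t + l)⁻¹) t := by
  have h1 : (0:ℝ) < 1 + t := by linarith
  have h2 : (0:ℝ) < t + l := by linarith
  have d1 : HasDerivAt (fun s : ℝ => Real.log (1 + s)) ((1 + t)⁻¹) t := by
    have : HasDerivAt (fun s : ℝ => 1 + s) 1 t := (hasDerivAt_id t).const_add 1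
    simpa [one_div] using this.log h1.ne'
  have d2 : HasDerivAt (fun s : ℝ => Real.log (s + l)) ((t + l)⁻¹) t := by
    have : HasDerivAt (fun s : ℝ => s + l) 1 t := (hasDerivAt_id t).add_const l
    simpa [one_div] using this.log h2.ne'
  exact d1.sub d2

lemma scalar_tendsto {l : ℝ} (hl : 0 < l) :
    Tendsto (fun s : ℝ => Real.log (1 + s) - Real.log (s + l)) atTop (𝓝 0) := by
  have h : Tendsto (fun s : ℝ => (1 + s) / (s + l)) atTop (𝓝 1) := by
    have h1 : Tendsto (fun s : ℝ => s⁻¹ + 1) atTop (𝓝 1) := by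
      simpa using tendsto_inv_atTop_zero.add (tendsto_const_nhds (α := ℝ) (x := (1:ℝ)))
    have h2 : Tendsto (fun s : ℝ => 1 + l * s⁻¹) atTop (𝓝 (1:ℝ)) := by
      have := tendsto_inv_atTop_zero.const_mul l
      simpa using (tendsto_const_nhds (α := ℝ) (x := (1:ℝ))).add this
    have h3 := h1.div h2 (by norm_num)
    rw [show ((1:ℝ)/1) = 1 by norm_num] at h3
    refine h3.congr' ?_
    filter_upwards [eventually_gt_atTop (0:ℝ)] with s hs
    have hs' : s ≠ 0 := ne_of_gt hs
    have hsl : s + l ≠ 0 := by positivity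
    rw [Pi.div_apply]
    field_simp
  have hlog : Tendsto (fun s : ℝ => Real.log ((1 + s) / (s + l))) atTop (𝓝 0) := by
    have := (Real.continuousAt_log (by norm_num : (1:ℝ) ≠ 0)).tendsto.comp h
    simpa [Function.comp_def] using this
  refine hlog.congr' ?_
  filter_upwards [eventually_gt_atTop (0:ℝ)] with s hs
  rw [Real.log_div (by linarith) (by linarith)]

lemma scalar_integrableOn {l : ℝ} (hl : 0 < l) :
    IntegrableOn (fun t : ℝ => (1 + t)⁻¹ - (t + l)⁻¹) (Set.Ioi 0) := by
  rcases le_total 1 l with h | h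
  · refine integrableOn_Ioi_deriv_of_nonneg' (g := fun s => Real.log (1 + s) - Real.log (s + l))
      (fun x hx => scalar_hasDeriv hl hx) (fun x hx => ?_) (scalar_tendsto hl)
    have hx0 : (0:ℝ) < x := hx
    have : (1:ℝ) + x ≤ x + l := by linarith
    have h1 : (0:ℝ) < 1 + x := by linarith
    have := inv_anti₀ h1 this
    linarith
  · refine integrableOn_Ioi_deriv_of_nonpos' (g := fun s => Real.log (1 + s) - Real.log (s + l))
      (fun x hx => scalar_hasDeriv hl hx) (fun x hx => ?_) (scalar_tendsto hl)
    have hx0 : (0:ℝ) < x := hx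
    have : x + l ≤ 1 + x := by linarith
    have h2 : (0:ℝ) < x + l := by linarith
    have := inv_anti₀ h2 this
    linarith

lemma scalar_integral {l : ℝ} (hl : 0 < l) :
    ∫ t in Set.Ioi (0:ℝ), ((1 + t)⁻¹ - (t + l)⁻¹) = Real.log l := by
  have := integral_Ioi_of_hasDerivAt_of_tendsto'
    (f := fun s => Real.log (1 + s) - Real.log (s + l))
    (f' := fun t => (1 + t)⁻¹ - (t + l)⁻¹)
    (fun x hx => scalar_hasDeriv hl hx) (scalar_integrableOn hl) (scalar_tendsto hl)
  simpa using this


/-- Functional-calculus logarithm of a Hermitian matrix: for `A = U diag(λᵢ) U*` with `U`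
unitary and `λᵢ` the (real) eigenvalues, `matLog A = U diag(ln λᵢ) U*`. (Junk value `0`
if `A` is not Hermitian.) -/
noncomputable def matLog (A : Matrix (Fin d) (Fin d) ℂ) : Matrix (Fin d) (Fin d) ℂ :=
  if h : A.IsHermitian then
    (h.eigenvectorUnitary : Matrix (Fin d) (Fin d) ℂ) *
      Matrix.diagonal (fun i => (Real.log (h.eigenvalues i) : ℂ)) *
      star (h.eigenvectorUnitary : Matrix (Fin d) (Fin d) ℂ)
  else 0


attribute [local instance] Matrix.normedAddCommGroup Matrix.normedSpace

lemma conj_diag_sum (U : Matrix (Fin d) (Fin d) ℂ) (v : Fin d → ℂ) :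
    U * Matrix.diagonal v * star U
      = ∑ i, v i • (U * Matrix.diagonal (Pi.single i 1) * star U) := by
  have hd : Matrix.diagonal v = ∑ i, v i • Matrix.diagonal (Pi.single i 1) := by
    ext j k
    by_cases hjk : j = k
    · subst hjk
      simp [Matrix.sum_apply, Matrix.diagonal_apply, Pi.single_apply]
    · simp [Matrix.sum_apply, Matrix.diagonal_apply, hjk]
  rw [hd, Finset.mul_sum, Finset.sum_mul]
  simp [Matrix.mul_smul, Matrix.smul_mul]

/-- Integral representation of the operator logarithm: for a positive definite Hermitian
matrix `A`, `log A = ∫₀^∞ ((1+t)⁻¹ • 1 − (t • 1 + A)⁻¹) dt` (Bochner integral over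
`(0,∞)`). -/
theorem matLog_eq_integral (d : ℕ) (A : Matrix (Fin d) (Fin d) ℂ) (hA : A.PosDef) :
    matLog A
      = ∫ t in Set.Ioi (0 : ℝ),
          ((1 + t)⁻¹ • (1 : Matrix (Fin d) (Fin d) ℂ)
            - (t • (1 : Matrix (Fin d) (Fin d) ℂ) + A)⁻¹) := by
  have h : A.IsHermitian := hA.1
  set U : Matrix (Fin d) (Fin d) ℂ := (h.eigenvectorUnitary : Matrix (Fin d) (Fin d) ℂ) with hUdef
  have hUU : U * star U = 1 := (Matrix.mem_unitaryGroup_iff).mp h.eigenvectorUnitary.2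
  have hUU' : star U * U = 1 := (Matrix.mem_unitaryGroup_iff').mp h.eigenvectorUnitary.2
  set lam : Fin d → ℝ := h.eigenvalues with hlamdef
  have hlam : ∀ i, 0 < lam i := fun i => hA.eigenvalues_pos i
  set M : Fin d → Matrix (Fin d) (Fin d) ℂ :=
    fun i => U * Matrix.diagonal (Pi.single i 1) * star U with hMdef
  have hconj : ∀ v : Fin d → ℂ,
      U * Matrix.diagonal v * star U = ∑ i, v i • M i := fun v => conj_diag_sum U v
  have hsmul : ∀ (r : ℝ) (B : Matrix (Fin d) (Fin d) ℂ), r • B = (r : ℂ) • B := by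
    intro r B; ext i j; simp [Matrix.smul_apply, Complex.real_smul]
  have hone : ∀ c : ℂ, c • (1 : Matrix (Fin d) (Fin d) ℂ)
      = U * Matrix.diagonal (fun _ => c) * star U := by
    intro c
    have hd : Matrix.diagonal (fun _ : Fin d => c) = c • (1 : Matrix (Fin d) (Fin d) ℂ) := by
      ext i j
      by_cases hij : i = j <;> simp [Matrix.diagonal_apply, Matrix.one_apply, hij]
    rw [hd, Matrix.mul_smul, Matrix.smul_mul, Matrix.mul_one, hUU]
  have key : ∀ t ∈ Set.Ioi (0:ℝ),
      ((1 + t)⁻¹ • (1 : Matrix (Fin d) (Fin d) ℂ)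
        - (t • (1 : Matrix (Fin d) (Fin d) ℂ) + A)⁻¹)
      = ∑ i, (((1 + t)⁻¹ - (t + lam i)⁻¹ : ℝ) : ℂ) • M i := by
    intro t ht
    have ht0 : (0:ℝ) < t := ht
    have hAeq : A = U * Matrix.diagonal (fun i => ((lam i : ℝ) : ℂ)) * star U := by
      simpa [Function.comp_def] using h.spectral_theorem
    have hsum : t • (1 : Matrix (Fin d) (Fin d) ℂ) + A
        = U * Matrix.diagonal (fun i => (((t + lam i : ℝ)) : ℂ)) * star U := by
      rw [hsmul, hone, hAeq, ← Matrix.add_mul, ← Matrix.mul_add, Matrix.diagonal_add]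
      congr 2
      funext i
      push_cast
      ring
    have hw : ∀ i, (((t + lam i : ℝ)) : ℂ) ≠ 0 := by
      intro i
      have : (0:ℝ) < t + lam i := by have := hlam i; linarith
      exact_mod_cast ne_of_gt this
    have hinv : (U * Matrix.diagonal (fun i => (((t + lam i : ℝ)) : ℂ)) * star U)⁻¹
        = U * Matrix.diagonal (fun i => ((((t + lam i)⁻¹ : ℝ)) : ℂ)) * star U := by
      apply Matrix.inv_eq_right_inv
      have e1 : (U * Matrix.diagonal (fun i => (((t + lam i : ℝ)) : ℂ)) * star U) *
          (U * Matrix.diagonal (fun i => ((((t + lam i)⁻¹ : ℝ)) : ℂ)) * star U)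
          = U * (Matrix.diagonal (fun i => (((t + lam i : ℝ)) : ℂ)) * (star U * U) *
              Matrix.diagonal (fun i => ((((t + lam i)⁻¹ : ℝ)) : ℂ))) * star U := by
        simp only [Matrix.mul_assoc]
      rw [e1, hUU', Matrix.mul_one, Matrix.diagonal_mul_diagonal]
      have e2 : (fun i => (((t + lam i : ℝ)) : ℂ) * ((((t + lam i)⁻¹ : ℝ)) : ℂ))
          = fun _ : Fin d => (1:ℂ) := by
        funext i
        rw [Complex.ofReal_inv, mul_inv_cancel₀ (hw i)]
      rw [e2, Matrix.diagonal_one, Matrix.mul_one, hUU]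
    rw [hsmul, hone, hsum, hinv, ← Matrix.sub_mul, ← Matrix.mul_sub, Matrix.diagonal_sub]
    rw [show (fun i => ((((1+t)⁻¹ : ℝ)) : ℂ) - ((((t + lam i)⁻¹ : ℝ)) : ℂ))
        = fun i => (((1 + t)⁻¹ - (t + lam i)⁻¹ : ℝ) : ℂ) from by
      funext i; push_cast; ring]
    exact hconj _
  rw [setIntegral_congr_fun measurableSet_Ioi key]
  have hint : ∀ i, @IntegrableOn ℝ (Matrix (Fin d) (Fin d) ℂ) _ _ SeminormedAddGroup.toContinuousENorm
      (fun t : ℝ => (((1 + t)⁻¹ - (t + lam i)⁻¹ : ℝ) : ℂ) • M i) (Set.Ioi 0) volume := fun i =>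
    ((scalar_integrableOn (hlam i)).ofReal.smul_const (M i))
  rw [MeasureTheory.integral_finset_sum _ (fun i _ => hint i)]
  have hval : ∀ i, (∫ t in Set.Ioi (0:ℝ), (((1 + t)⁻¹ - (t + lam i)⁻¹ : ℝ) : ℂ) • M i)
      = ((Real.log (lam i) : ℝ) : ℂ) • M i := by
    intro i
    rw [integral_smul_const]
    congr 1
    rw [show (fun x : ℝ => (((1 + x)⁻¹ - (x + lam i)⁻¹ : ℝ) : ℂ))
        = fun x : ℝ => (RCLike.ofReal ((1 + x)⁻¹ - (x + lam i)⁻¹ : ℝ) : ℂ) from rfl,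
      integral_ofReal, scalar_integral (hlam i)]
    rfl
  simp only [hval]
  rw [matLog, dif_pos h]
  exact hconj _
end

section
/- Let A be a positive definite Hermitian matrix in Matrix (Fin d) (Fin d) ℂ. Then ∫₀^∞ (u • 1 + A)⁻¹ * A * (u • 1 + A)⁻¹ du = 1, where 1 denotes the identity matrix and the integral is a Bochner integral of matrix-valued functions over (0, ∞). -/
open Matrix
open scoped Classical ComplexOrder

variable {d : ℕ}

open MeasureTheory Set Filter

lemma real_int {c : ℝ} (hc : 0 < c) :
    IntegrableOn (fun u : ℝ => c / (u + c) ^ 2) (Ioi 0) ∧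
    ∫ u in Ioi (0:ℝ), c / (u + c) ^ 2 = 1 := by
  have hderiv : ∀ x ∈ Ici (0:ℝ), HasDerivAt (fun u : ℝ => -c / (u + c)) (c / (x + c) ^ 2) x := by
    intro x hx
    have hx0 : (0:ℝ) ≤ x := hx
    have hne : x + c ≠ 0 := by positivity
    have h1 : HasDerivAt (fun u : ℝ => u + c) 1 x := (hasDerivAt_id x).add_const c
    have h3 := (h1.inv hne).const_mul (-c)
    have h4 : (fun u : ℝ => -c / (u + c)) = fun u => -c * (u + c)⁻¹ := by
      funext u; rw [div_eq_mul_inv]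
    have h5 : c / (x + c) ^ 2 = -c * (-1 / (x + c) ^ 2) := by ring
    rw [h4, h5]; exact h3
  have hpos : ∀ x ∈ Ioi (0:ℝ), 0 ≤ c / (x + c) ^ 2 := by
    intro x hx; positivity
  have htend : Tendsto (fun u : ℝ => -c / (u + c)) atTop (nhds 0) :=
    Tendsto.div_atTop tendsto_const_nhds (tendsto_atTop_add_const_right _ c tendsto_id)
  refine ⟨integrableOn_Ioi_deriv_of_nonneg' hderiv hpos htend, ?_⟩
  rw [integral_Ioi_of_hasDerivAt_of_nonneg' hderiv hpos htend]
  field_simp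
  ring

lemma complex_int {c : ℝ} (hc : 0 < c) :
    IntegrableOn (fun u : ℝ => (c : ℂ) / ((u : ℂ) + c) ^ 2) (Ioi 0) ∧
    ∫ u in Ioi (0:ℝ), (c : ℂ) / ((u : ℂ) + c) ^ 2 = 1 := by
  have heq : (fun u : ℝ => (c : ℂ) / ((u : ℂ) + c) ^ 2)
      = fun u : ℝ => ((c / (u + c) ^ 2 : ℝ) : ℂ) := by
    funext u; push_cast; ring
  obtain ⟨hInt, hVal⟩ := real_int hc
  constructor
  · rw [heq]; exact hInt.ofReal
  · rw [heq]
    have h2 := integral_ofReal (𝕜 := ℂ) (f := fun u : ℝ => c / (u + c) ^ 2)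
      (μ := MeasureTheory.volume.restrict (Ioi 0))
    rw [hVal] at h2
    simpa using h2

lemma diagonal_eq_sum_smul_stdBasisMatrix (f : Fin d → ℂ) :
    Matrix.diagonal f = ∑ i, f i • Matrix.single i i (1 : ℂ) := by
  ext a b
  rw [Matrix.sum_apply]
  by_cases hab : a = b
  · subst hab
    rw [Matrix.diagonal_apply_eq, Finset.sum_eq_single a]
    · simp [Matrix.single]
    · intro i _ hia
      simp [Matrix.single, hia]
    · simp
  · rw [Matrix.diagonal_apply_ne _ hab, Finset.sum_eq_zero]
    intro i _
    simp only [Matrix.smul_apply, Matrix.single, Matrix.of_apply, smul_eq_mul]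
    rw [if_neg, mul_zero]
    rintro ⟨rfl, rfl⟩
    exact hab rfl

attribute [local instance] Matrix.normedAddCommGroup Matrix.normedSpace

/-- For a positive definite Hermitian matrix `A`,
`∫₀^∞ (u•1+A)⁻¹ A (u•1+A)⁻¹ du = 1` (Bochner integral over `(0,∞)`). -/
theorem integral_resolvent_mul_self_eq_one (d : ℕ) (A : Matrix (Fin d) (Fin d) ℂ)
    (hA : A.PosDef) :
    (∫ u in Set.Ioi (0 : ℝ),
        (u • (1 : Matrix (Fin d) (Fin d) ℂ) + A)⁻¹ * A
          * (u • (1 : Matrix (Fin d) (Fin d) ℂ) + A)⁻¹)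
      = (1 : Matrix (Fin d) (Fin d) ℂ) := by
  have h : A.IsHermitian := hA.1
  set U : Matrix (Fin d) (Fin d) ℂ := (h.eigenvectorUnitary : Matrix (Fin d) (Fin d) ℂ) with hUdef
  have hU : U * star U = 1 := Matrix.mem_unitaryGroup_iff.mp h.eigenvectorUnitary.2
  have hU' : star U * U = 1 := Matrix.mem_unitaryGroup_iff'.mp h.eigenvectorUnitary.2
  set lam : Fin d → ℝ := h.eigenvalues with hlamdef
  have hlam : ∀ i, 0 < lam i := fun i => hA.eigenvalues_pos i
  have hspec : A = U * Matrix.diagonal (fun i => (lam i : ℂ)) * star U := h.spectral_theorem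
  set g : Fin d → ℝ → ℂ := fun i u => (lam i : ℂ) / ((u : ℂ) + lam i) ^ 2 with hgdef
  set C : Fin d → Matrix (Fin d) (Fin d) ℂ :=
    fun i => U * Matrix.single i i (1 : ℂ) * star U with hCdef
  have conj_mul : ∀ f₁ f₂ : Fin d → ℂ,
      (U * Matrix.diagonal f₁ * star U) * (U * Matrix.diagonal f₂ * star U)
        = U * Matrix.diagonal (fun i => f₁ i * f₂ i) * star U := by
    intro f₁ f₂
    have : (U * Matrix.diagonal f₁ * star U) * (U * Matrix.diagonal f₂ * star U)
        = U * (Matrix.diagonal f₁ * ((star U * U) * Matrix.diagonal f₂)) * star U := by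
      simp only [Matrix.mul_assoc]
    rw [this, hU', Matrix.one_mul, ← Matrix.diagonal_mul_diagonal]
  -- Step A: pointwise identity on Ioi 0
  have stepA : ∀ u ∈ Ioi (0:ℝ),
      (u • (1 : Matrix (Fin d) (Fin d) ℂ) + A)⁻¹ * A
        * (u • (1 : Matrix (Fin d) (Fin d) ℂ) + A)⁻¹ = ∑ i, g i u • C i := by
    intro u hu
    have hu0 : (0:ℝ) < u := hu
    have hne : ∀ i, ((u + lam i : ℝ) : ℂ) ≠ 0 := by
      intro i
      have : (0:ℝ) < u + lam i := by have := hlam i; linarith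
      exact Complex.ofReal_ne_zero.mpr this.ne'
    have hone : u • (1 : Matrix (Fin d) (Fin d) ℂ) = (u : ℂ) • 1 := by
      ext a b; simp [Matrix.smul_apply, Matrix.one_apply, Complex.real_smul]
    have hsmul_diag : (u : ℂ) • (1 : Matrix (Fin d) (Fin d) ℂ)
        = Matrix.diagonal (fun _ => (u : ℂ)) := by
      ext a b
      by_cases hab : a = b <;>
        simp [Matrix.smul_apply, Matrix.one_apply, Matrix.diagonal_apply, hab]
    have hsum : u • (1 : Matrix (Fin d) (Fin d) ℂ) + A
        = U * Matrix.diagonal (fun i => ((u + lam i : ℝ) : ℂ)) * star U := by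
      rw [hone, hspec]
      have h1 : (u : ℂ) • (1 : Matrix (Fin d) (Fin d) ℂ)
          = U * Matrix.diagonal (fun _ => (u : ℂ)) * star U := by
        rw [← hsmul_diag, Matrix.mul_smul, Matrix.smul_mul, mul_one, hU]
      rw [h1, ← Matrix.add_mul, ← Matrix.mul_add, Matrix.diagonal_add]
      congr 1
      funext i
      push_cast
      ring
    have hinv : (u • (1 : Matrix (Fin d) (Fin d) ℂ) + A)⁻¹
        = U * Matrix.diagonal (fun i => ((u + lam i : ℝ) : ℂ)⁻¹) * star U := by
      apply Matrix.inv_eq_right_inv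
      rw [hsum, conj_mul]
      have : (fun i => ((u + lam i : ℝ) : ℂ) * ((u + lam i : ℝ) : ℂ)⁻¹)
          = fun _ => (1:ℂ) := by funext i; exact mul_inv_cancel₀ (hne i)
      rw [this, Matrix.diagonal_one, Matrix.mul_one, hU]
    rw [hinv, hspec, conj_mul, conj_mul]
    have hgval : (fun i => ((u + lam i : ℝ) : ℂ)⁻¹ * (lam i : ℂ) * ((u + lam i : ℝ) : ℂ)⁻¹)
        = fun i => g i u := by
      funext i
      have hc : ((u + lam i : ℝ) : ℂ) = (u : ℂ) + lam i := by push_cast; ring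
      have hne' : (u : ℂ) + (lam i : ℂ) ≠ 0 := by rw [← hc]; exact hne i
      rw [hgdef]
      simp only [hc]
      field_simp
    rw [hgval, diagonal_eq_sum_smul_stdBasisMatrix, Finset.mul_sum, Finset.sum_mul]
    refine Finset.sum_congr rfl fun i _ => ?_
    rw [Matrix.mul_smul, Matrix.smul_mul]
  rw [MeasureTheory.setIntegral_congr_fun measurableSet_Ioi stepA]
  letI : ContinuousENorm (Matrix (Fin d) (Fin d) ℂ) := @SeminormedAddGroup.toContinuousENorm _ _
  have hint : ∀ i : Fin d, IntegrableOn (fun u => g i u • C i) (Ioi (0:ℝ)) :=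
    fun i => ((complex_int (hlam i)).1).smul_const (C i)
  rw [MeasureTheory.integral_finset_sum _ (fun i _ => hint i)]
  have hval : ∀ i : Fin d, (∫ u in Ioi (0:ℝ), g i u • C i) = C i := by
    intro i
    rw [integral_smul_const, (complex_int (hlam i)).2, one_smul]
  simp_rw [hval]
  rw [hCdef]
  simp only
  rw [← Finset.sum_mul, ← Finset.mul_sum]
  have hsum1 : (∑ i, Matrix.single i i (1:ℂ)) = (1 : Matrix (Fin d) (Fin d) ℂ) := by
    have h2 := diagonal_eq_sum_smul_stdBasisMatrix (fun _ : Fin d => (1:ℂ))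
    simp only [one_smul] at h2
    rw [← h2, Matrix.diagonal_one]
  rw [hsum1, Matrix.mul_one, hU]
end

section
/- Let η be a positive definite Hermitian matrix and A a Hermitian matrix in Matrix (Fin d) (Fin d) ℂ. Then ∫₀^∞ Tr( (u•1+η)⁻¹ A (u•1+η)⁻¹ A ) du − ∫₀^∞ Tr( η (u•1+η)⁻² A (u•1+η)⁻¹ A ) du = (1/2) ∫₀^∞ Tr( (u•1+η)⁻¹ A (u•1+η)⁻¹ A ) du, where 1 denotes the identity matrix, (u•1+η)⁻² = ((u•1+η)⁻¹)², and all integrals are over (0, ∞) and converge. -/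
open Matrix MeasureTheory
open scoped ComplexOrder

open Set Filter Topology

private lemma aux_int_sq (c : ℝ) (hc : 0 < c) :
    IntegrableOn (fun u : ℝ => ((u + c) ^ 2)⁻¹) (Set.Ioi 0) := by
  have hderiv : ∀ x ∈ Ici (0:ℝ), HasDerivAt (fun u : ℝ => -(u + c)⁻¹) (((x + c) ^ 2)⁻¹) x := by
    intro x hx
    have hx0 : (0:ℝ) ≤ x := hx
    have hne : x + c ≠ 0 := by nlinarith
    have := (((hasDerivAt_id x).add_const c).inv hne).neg
    refine this.congr_deriv ?_
    simp only [id, neg_div, neg_neg, one_div]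
  have hpos : ∀ x ∈ Ioi (0:ℝ), 0 ≤ ((x + c) ^ 2)⁻¹ := fun x _ => by positivity
  have ht : Tendsto (fun u : ℝ => -(u + c)⁻¹) atTop (𝓝 (-0)) :=
    (tendsto_inv_atTop_zero.comp (tendsto_atTop_add_const_right _ c tendsto_id)).neg
  exact integrableOn_Ioi_deriv_of_nonneg' hderiv hpos ht

private lemma aux_int_g (a b : ℝ) (ha : 0 < a) (hb : 0 < b) :
    IntegrableOn (fun u : ℝ => ((u + a) * (u + b))⁻¹) (Set.Ioi 0) := by
  set m := min a b with hm
  have hm0 : 0 < m := lt_min ha hb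
  refine Integrable.mono' (aux_int_sq m hm0) ?_ ?_
  · refine (ContinuousOn.inv₀ (by fun_prop) ?_).aestronglyMeasurable measurableSet_Ioi
    intro x hx
    have hx0 : (0:ℝ) < x := hx
    positivity
  · refine (ae_restrict_iff' measurableSet_Ioi).2 (ae_of_all _ fun x hx => ?_)
    have hx0 : (0:ℝ) < x := hx
    have h1 : (0:ℝ) < (x + a) * (x + b) := by positivity
    have h2 : (x + m) ^ 2 ≤ (x + a) * (x + b) := by
      have := min_le_left a b; have := min_le_right a b; nlinarith
    rw [Real.norm_eq_abs, abs_of_pos (by positivity)]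
    exact inv_anti₀ (by positivity) h2

private lemma aux_int_f (a b : ℝ) (ha : 0 < a) (hb : 0 < b) :
    IntegrableOn (fun u : ℝ => a * ((u + a) ^ 2 * (u + b))⁻¹) (Set.Ioi 0) := by
  refine Integrable.mono' ((aux_int_sq a ha).const_mul (a / b)) ?_ ?_
  · refine (continuousOn_const.mul (ContinuousOn.inv₀ (by fun_prop) ?_)).aestronglyMeasurable
      measurableSet_Ioi
    intro x hx
    have hx0 : (0:ℝ) < x := hx
    positivity
  · refine (ae_restrict_iff' measurableSet_Ioi).2 (ae_of_all _ fun x hx => ?_)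
    have hx0 : (0:ℝ) < x := hx
    rw [Real.norm_eq_abs, abs_of_pos (by positivity)]
    rw [mul_inv, ← mul_assoc, div_mul_eq_mul_div, div_eq_mul_inv]
    gcongr
    linarith

private lemma aux_key (a b : ℝ) (ha : 0 < a) (hb : 0 < b) :
    (∫ u in Set.Ioi (0:ℝ), a * ((u + a) ^ 2 * (u + b))⁻¹)
      + (∫ u in Set.Ioi (0:ℝ), b * ((u + b) ^ 2 * (u + a))⁻¹)
      = ∫ u in Set.Ioi (0:ℝ), ((u + a) * (u + b))⁻¹ := by
  set φ : ℝ → ℝ := fun u => u * ((u + a) * (u + b))⁻¹ with hφ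
  have hderiv : ∀ x ∈ Ici (0:ℝ), HasDerivAt φ
      (a * ((x + a) ^ 2 * (x + b))⁻¹ + b * ((x + b) ^ 2 * (x + a))⁻¹
        - ((x + a) * (x + b))⁻¹) x := by
    intro x hx
    have hx0 : (0:ℝ) ≤ x := hx
    have hna : x + a ≠ 0 := by nlinarith
    have hnb : x + b ≠ 0 := by nlinarith
    have hden : (x + a) * (x + b) ≠ 0 := mul_ne_zero hna hnb
    have h1 : HasDerivAt (fun u : ℝ => (u + a) * (u + b)) (1 * (x + b) + (x + a) * 1) x :=
      ((hasDerivAt_id x).add_const a).mul ((hasDerivAt_id x).add_const b)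
    have h2 := (hasDerivAt_id x).mul (h1.inv hden)
    refine h2.congr_deriv ?_
    simp only [id, Pi.inv_apply]
    field_simp
    ring
  have hcont : ContinuousWithinAt φ (Ici 0) 0 := by
    apply ContinuousAt.continuousWithinAt
    have : (0 + a) * (0 + b) ≠ 0 := by positivity
    fun_prop (disch := assumption)
  have hint : IntegrableOn (fun x : ℝ =>
      a * ((x + a) ^ 2 * (x + b))⁻¹ + b * ((x + b) ^ 2 * (x + a))⁻¹
        - ((x + a) * (x + b))⁻¹) (Set.Ioi 0) :=
    ((aux_int_f a b ha hb).add (aux_int_f b a hb ha)).sub (aux_int_g a b ha hb)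
  have htend : Tendsto φ atTop (𝓝 0) := by
    apply tendsto_of_tendsto_of_tendsto_of_le_of_le' tendsto_const_nhds
      (tendsto_inv_atTop_zero.comp (tendsto_atTop_add_const_right _ b tendsto_id))
    · filter_upwards [eventually_ge_atTop (0:ℝ)] with u hu
      have : (0:ℝ) < (u + a) * (u + b) := by nlinarith
      positivity
    · filter_upwards [eventually_ge_atTop (0:ℝ)] with u hu
      have h2 : (0:ℝ) < u + b := by linarith
      have h3 : (0:ℝ) < u + a := by linarith
      have : φ u ≤ (u + a) * ((u + a) * (u + b))⁻¹ := by
        apply mul_le_mul_of_nonneg_right (by linarith)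
        positivity
      calc φ u ≤ (u + a) * ((u + a) * (u + b))⁻¹ := this
        _ = (u + b)⁻¹ := by field_simp
  have h0 := integral_Ioi_of_hasDerivAt_of_tendsto hcont (fun x hx => hderiv x (mem_Ici.2 (le_of_lt (mem_Ioi.1 hx))))
    hint htend
  rw [hφ] at h0
  simp only [zero_mul, zero_add, sub_zero] at h0
  have hadd : IntegrableOn (fun x : ℝ =>
      a * ((x + a) ^ 2 * (x + b))⁻¹ + b * ((x + b) ^ 2 * (x + a))⁻¹) (Set.Ioi 0) :=
    (aux_int_f a b ha hb).add (aux_int_f b a hb ha)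
  rw [integral_sub hadd (aux_int_g a b ha hb),
    integral_add (aux_int_f a b ha hb) (aux_int_f b a hb ha)] at h0
  linarith

private lemma aux_resolvent {d : ℕ} (η : Matrix (Fin d) (Fin d) ℂ) (hη : η.PosDef)
    (u : ℝ) (hu : 0 ≤ u) :
    (u • (1 : Matrix (Fin d) (Fin d) ℂ) + η)⁻¹
      = (hη.1.eigenvectorUnitary : Matrix (Fin d) (Fin d) ℂ)
        * Matrix.diagonal (fun i => (((u + hη.1.eigenvalues i : ℝ)) : ℂ)⁻¹)
        * star (hη.1.eigenvectorUnitary : Matrix (Fin d) (Fin d) ℂ) := by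
  set U : Matrix (Fin d) (Fin d) ℂ := (hη.1.eigenvectorUnitary : Matrix (Fin d) (Fin d) ℂ) with hU
  set a : Fin d → ℝ := hη.1.eigenvalues with ha
  have hpos : ∀ i, (0:ℝ) < u + a i := fun i => by
    have := hη.eigenvalues_pos i; linarith
  have hne : ∀ i, ((u + a i : ℝ) : ℂ) ≠ 0 := fun i =>
    Complex.ofReal_ne_zero.mpr (ne_of_gt (hpos i))
  have hU1 : U * star U = 1 := Matrix.mem_unitaryGroup_iff.mp hη.1.eigenvectorUnitary.2
  have hU2 : star U * U = 1 := Matrix.mem_unitaryGroup_iff'.mp hη.1.eigenvectorUnitary.2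
  have hdec : u • (1 : Matrix (Fin d) (Fin d) ℂ) + η
      = U * Matrix.diagonal (fun i => ((u + a i : ℝ) : ℂ)) * star U := by
    have hsp := hη.1.spectral_theorem
    rw [Unitary.conjStarAlgAut_apply] at hsp
    have hdsum : Matrix.diagonal (fun i => ((u + a i : ℝ) : ℂ))
        = (u : ℂ) • (1 : Matrix (Fin d) (Fin d) ℂ)
          + Matrix.diagonal (RCLike.ofReal ∘ a) := by
      ext i j
      by_cases h : i = j <;>
        simp [Matrix.diagonal_apply, h, Matrix.one_apply, Matrix.add_apply]
    rw [hdsum, Matrix.mul_add, Matrix.add_mul, ← hsp]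
    congr 1
    · rw [Matrix.mul_smul, Matrix.smul_mul, Matrix.mul_one, hU1]
      ext i j
      simp [Complex.real_smul]
  rw [hdec]
  apply Matrix.inv_eq_right_inv
  have hDD : Matrix.diagonal (fun i => ((u + a i : ℝ) : ℂ))
      * Matrix.diagonal (fun i => ((u + a i : ℝ) : ℂ)⁻¹) = 1 := by
    rw [Matrix.diagonal_mul_diagonal]
    have hfun : (fun i => ((u + a i : ℝ) : ℂ) * ((u + a i : ℝ) : ℂ)⁻¹) = fun _ => (1:ℂ) :=
      funext fun i => mul_inv_cancel₀ (hne i)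
    rw [hfun, Matrix.diagonal_one]
  simp only [Matrix.mul_assoc]
  rw [← Matrix.mul_assoc (star U) U, hU2, Matrix.one_mul,
    ← Matrix.mul_assoc (Matrix.diagonal _) (Matrix.diagonal _), hDD, Matrix.one_mul, hU1]

private lemma aux_trace_diag {d : ℕ} (r s : Fin d → ℂ) (B C : Matrix (Fin d) (Fin d) ℂ) :
    (Matrix.diagonal r * B * Matrix.diagonal s * C).trace
      = ∑ i, ∑ j, r i * B i j * (s j * C j i) := by
  simp only [Matrix.trace, Matrix.diag, Matrix.mul_apply, Matrix.diagonal_apply, ite_mul,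
    zero_mul, mul_ite, mul_zero, Finset.sum_ite_eq, Finset.sum_ite_eq', Finset.mem_univ,
    if_true]
  refine Finset.sum_congr rfl fun i _ => Finset.sum_congr rfl fun j _ => by ring

private lemma aux_trace_conj {d : ℕ} (U A : Matrix (Fin d) (Fin d) ℂ) (r s : Fin d → ℂ) :
    ((U * Matrix.diagonal r * star U) * A * (U * Matrix.diagonal s * star U) * A).trace
      = ∑ i, ∑ j, r i * (star U * A * U) i j * (s j * (star U * A * U) j i) := by
  have e1 : (U * Matrix.diagonal r * star U) * A * (U * Matrix.diagonal s * star U) * A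
      = U * ((Matrix.diagonal r * (star U * A * U) * Matrix.diagonal s) * (star U * A)) := by
    simp only [Matrix.mul_assoc]
  rw [e1, Matrix.trace_mul_comm]
  have e2 : (Matrix.diagonal r * (star U * A * U) * Matrix.diagonal s) * (star U * A) * U
      = Matrix.diagonal r * (star U * A * U) * Matrix.diagonal s * (star U * A * U) := by
    simp only [Matrix.mul_assoc]
  rw [e2, aux_trace_diag]

private lemma aux_eq1 {d : ℕ} (η A : Matrix (Fin d) (Fin d) ℂ) (hη : η.PosDef)
    (u : ℝ) (hu : 0 < u) :
    ((u • (1 : Matrix (Fin d) (Fin d) ℂ) + η)⁻¹ * A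
        * (u • (1 : Matrix (Fin d) (Fin d) ℂ) + η)⁻¹ * A).trace
      = ∑ i, ∑ j,
          ((star (hη.1.eigenvectorUnitary : Matrix (Fin d) (Fin d) ℂ) * A
              * (hη.1.eigenvectorUnitary : Matrix (Fin d) (Fin d) ℂ)) i j
            * (star (hη.1.eigenvectorUnitary : Matrix (Fin d) (Fin d) ℂ) * A
              * (hη.1.eigenvectorUnitary : Matrix (Fin d) (Fin d) ℂ)) j i)
          * ((((u + hη.1.eigenvalues i) * (u + hη.1.eigenvalues j))⁻¹ : ℝ) : ℂ) := by
  rw [aux_resolvent η hη u hu.le, aux_trace_conj]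
  refine Finset.sum_congr rfl fun i _ => Finset.sum_congr rfl fun j _ => ?_
  push_cast [mul_inv]
  ring

private lemma aux_eq2 {d : ℕ} (η A : Matrix (Fin d) (Fin d) ℂ) (hη : η.PosDef)
    (u : ℝ) (hu : 0 < u) :
    (η * ((u • (1 : Matrix (Fin d) (Fin d) ℂ) + η)⁻¹
          * (u • (1 : Matrix (Fin d) (Fin d) ℂ) + η)⁻¹) * A
        * (u • (1 : Matrix (Fin d) (Fin d) ℂ) + η)⁻¹ * A).trace
      = ∑ i, ∑ j,
          ((star (hη.1.eigenvectorUnitary : Matrix (Fin d) (Fin d) ℂ) * A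
              * (hη.1.eigenvectorUnitary : Matrix (Fin d) (Fin d) ℂ)) i j
            * (star (hη.1.eigenvectorUnitary : Matrix (Fin d) (Fin d) ℂ) * A
              * (hη.1.eigenvectorUnitary : Matrix (Fin d) (Fin d) ℂ)) j i)
          * (((hη.1.eigenvalues i
              * ((u + hη.1.eigenvalues i) ^ 2 * (u + hη.1.eigenvalues j))⁻¹ : ℝ)) : ℂ) := by
  set U : Matrix (Fin d) (Fin d) ℂ := (hη.1.eigenvectorUnitary : Matrix (Fin d) (Fin d) ℂ)
    with hUdef
  set a : Fin d → ℝ := hη.1.eigenvalues with hadef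
  have hU2 : star U * U = 1 := Matrix.mem_unitaryGroup_iff'.mp hη.1.eigenvectorUnitary.2
  have hpos : ∀ i, (0:ℝ) < u + a i := fun i => by
    have := hη.eigenvalues_pos i; linarith
  have hne : ∀ i, ((u + a i : ℝ) : ℂ) ≠ 0 := fun i =>
    Complex.ofReal_ne_zero.mpr (ne_of_gt (hpos i))
  rw [aux_resolvent η hη u hu.le]
  set D : Matrix (Fin d) (Fin d) ℂ :=
    Matrix.diagonal (fun i => ((u + a i : ℝ) : ℂ)⁻¹) with hDdef
  have hEta : η * ((U * D * star U) * (U * D * star U))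
      = U * Matrix.diagonal
          (fun i => (a i : ℂ) * (((u + a i : ℝ) : ℂ)⁻¹ * ((u + a i : ℝ) : ℂ)⁻¹)) * star U := by
    conv_lhs => rw [hη.1.spectral_theorem, Unitary.conjStarAlgAut_apply]
    simp only [Matrix.mul_assoc]
    rw [← Matrix.mul_assoc (star U) U, hU2, Matrix.one_mul,
      ← Matrix.mul_assoc (star U) U, hU2, Matrix.one_mul]
    simp only [← Matrix.mul_assoc]
    congr 1
    rw [Matrix.mul_assoc _ D D, hDdef, Matrix.diagonal_mul_diagonal, Matrix.mul_assoc,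
      Matrix.diagonal_mul_diagonal]
    congr 2
  rw [hEta, aux_trace_conj]
  refine Finset.sum_congr rfl fun i _ => Finset.sum_congr rfl fun j _ => ?_
  push_cast [mul_inv]
  field_simp

/-- Integration-by-parts identity for trace integrals: for a positive definite Hermitian
matrix `η` and a Hermitian matrix `A`,
`∫₀^∞ Tr((u+η)⁻¹A(u+η)⁻¹A) du − ∫₀^∞ Tr(η(u+η)⁻²A(u+η)⁻¹A) du
  = ½ ∫₀^∞ Tr((u+η)⁻¹A(u+η)⁻¹A) du`, and all the integrals converge. -/
theorem trace_integral_by_parts (d : ℕ) (η A : Matrix (Fin d) (Fin d) ℂ)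
    (hη : η.PosDef) (hA : A.IsHermitian) :
    IntegrableOn
        (fun u : ℝ =>
          ((u • (1 : Matrix (Fin d) (Fin d) ℂ) + η)⁻¹ * A
            * (u • (1 : Matrix (Fin d) (Fin d) ℂ) + η)⁻¹ * A).trace)
        (Set.Ioi (0 : ℝ))
      ∧ IntegrableOn
        (fun u : ℝ =>
          (η * ((u • (1 : Matrix (Fin d) (Fin d) ℂ) + η)⁻¹
              * (u • (1 : Matrix (Fin d) (Fin d) ℂ) + η)⁻¹) * A
            * (u • (1 : Matrix (Fin d) (Fin d) ℂ) + η)⁻¹ * A).trace)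
        (Set.Ioi (0 : ℝ))
      ∧ (∫ u in Set.Ioi (0 : ℝ),
            ((u • (1 : Matrix (Fin d) (Fin d) ℂ) + η)⁻¹ * A
              * (u • (1 : Matrix (Fin d) (Fin d) ℂ) + η)⁻¹ * A).trace)
          - (∫ u in Set.Ioi (0 : ℝ),
              (η * ((u • (1 : Matrix (Fin d) (Fin d) ℂ) + η)⁻¹
                  * (u • (1 : Matrix (Fin d) (Fin d) ℂ) + η)⁻¹) * A
                * (u • (1 : Matrix (Fin d) (Fin d) ℂ) + η)⁻¹ * A).trace)
        = (1 / 2 : ℂ)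
            * ∫ u in Set.Ioi (0 : ℝ),
                ((u • (1 : Matrix (Fin d) (Fin d) ℂ) + η)⁻¹ * A
                  * (u • (1 : Matrix (Fin d) (Fin d) ℂ) + η)⁻¹ * A).trace := by
  classical
  set B : Matrix (Fin d) (Fin d) ℂ :=
    star (hη.1.eigenvectorUnitary : Matrix (Fin d) (Fin d) ℂ) * A
      * (hη.1.eigenvectorUnitary : Matrix (Fin d) (Fin d) ℂ) with hBdef
  set a : Fin d → ℝ := hη.1.eigenvalues with hadef
  have hpos : ∀ i, 0 < a i := hη.eigenvalues_pos
  have h1 : ∀ u ∈ Set.Ioi (0:ℝ),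
      ((u • (1 : Matrix (Fin d) (Fin d) ℂ) + η)⁻¹ * A
          * (u • (1 : Matrix (Fin d) (Fin d) ℂ) + η)⁻¹ * A).trace
        = ∑ i, ∑ j, (B i j * B j i) * ((((u + a i) * (u + a j))⁻¹ : ℝ) : ℂ) :=
    fun u hu => aux_eq1 η A hη u hu
  have h2 : ∀ u ∈ Set.Ioi (0:ℝ),
      (η * ((u • (1 : Matrix (Fin d) (Fin d) ℂ) + η)⁻¹
            * (u • (1 : Matrix (Fin d) (Fin d) ℂ) + η)⁻¹) * A
          * (u • (1 : Matrix (Fin d) (Fin d) ℂ) + η)⁻¹ * A).trace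
        = ∑ i, ∑ j, (B i j * B j i)
            * (((a i * ((u + a i) ^ 2 * (u + a j))⁻¹ : ℝ)) : ℂ) :=
    fun u hu => aux_eq2 η A hη u hu
  have hgint : ∀ i j : Fin d, IntegrableOn
      (fun u : ℝ => (B i j * B j i) * ((((u + a i) * (u + a j))⁻¹ : ℝ) : ℂ))
      (Set.Ioi 0) :=
    fun i j => ((aux_int_g _ _ (hpos i) (hpos j)).ofReal).const_mul _
  have hfint : ∀ i j : Fin d, IntegrableOn
      (fun u : ℝ => (B i j * B j i) * (((a i * ((u + a i) ^ 2 * (u + a j))⁻¹ : ℝ)) : ℂ))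
      (Set.Ioi 0) :=
    fun i j => ((aux_int_f _ _ (hpos i) (hpos j)).ofReal).const_mul _
  have hsum1 : IntegrableOn
      (fun u : ℝ => ∑ i, ∑ j, (B i j * B j i) * ((((u + a i) * (u + a j))⁻¹ : ℝ) : ℂ))
      (Set.Ioi 0) :=
    integrable_finset_sum _ fun i _ => integrable_finset_sum _ fun j _ => hgint i j
  have hsum2 : IntegrableOn
      (fun u : ℝ => ∑ i, ∑ j, (B i j * B j i)
        * (((a i * ((u + a i) ^ 2 * (u + a j))⁻¹ : ℝ)) : ℂ))
      (Set.Ioi 0) :=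
    integrable_finset_sum _ fun i _ => integrable_finset_sum _ fun j _ => hfint i j
  refine ⟨hsum1.congr_fun (fun u hu => (h1 u hu).symm) measurableSet_Ioi,
    hsum2.congr_fun (fun u hu => (h2 u hu).symm) measurableSet_Ioi, ?_⟩
  have hI1 : (∫ u in Set.Ioi (0:ℝ),
        ((u • (1 : Matrix (Fin d) (Fin d) ℂ) + η)⁻¹ * A
          * (u • (1 : Matrix (Fin d) (Fin d) ℂ) + η)⁻¹ * A).trace)
      = ∑ i, ∑ j, (B i j * B j i)
          * ((∫ u in Set.Ioi (0:ℝ), ((u + a i) * (u + a j))⁻¹ : ℝ) : ℂ) := by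
    rw [setIntegral_congr_fun measurableSet_Ioi h1,
      integral_finset_sum _ fun i _ => integrable_finset_sum _ fun j _ => hgint i j]
    refine Finset.sum_congr rfl fun i _ => ?_
    rw [integral_finset_sum _ fun j _ => hgint i j]
    exact Finset.sum_congr rfl fun j _ => by rw [integral_const_mul]; congr 1; exact integral_ofReal
  have hI2 : (∫ u in Set.Ioi (0:ℝ),
        (η * ((u • (1 : Matrix (Fin d) (Fin d) ℂ) + η)⁻¹
            * (u • (1 : Matrix (Fin d) (Fin d) ℂ) + η)⁻¹) * A
          * (u • (1 : Matrix (Fin d) (Fin d) ℂ) + η)⁻¹ * A).trace)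
      = ∑ i, ∑ j, (B i j * B j i)
          * ((∫ u in Set.Ioi (0:ℝ), a i * ((u + a i) ^ 2 * (u + a j))⁻¹ : ℝ) : ℂ) := by
    rw [setIntegral_congr_fun measurableSet_Ioi h2,
      integral_finset_sum _ fun i _ => integrable_finset_sum _ fun j _ => hfint i j]
    refine Finset.sum_congr rfl fun i _ => ?_
    rw [integral_finset_sum _ fun j _ => hfint i j]
    exact Finset.sum_congr rfl fun j _ => by rw [integral_const_mul]; congr 1; exact integral_ofReal
  rw [hI1, hI2]
  set F : Fin d → Fin d → ℝ :=
    fun i j => ∫ u in Set.Ioi (0:ℝ), a i * ((u + a i) ^ 2 * (u + a j))⁻¹ with hFdef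
  set G : Fin d → Fin d → ℝ :=
    fun i j => ∫ u in Set.Ioi (0:ℝ), ((u + a i) * (u + a j))⁻¹ with hGdef
  have hkey : ∀ i j, F i j + F j i = G i j :=
    fun i j => aux_key _ _ (hpos i) (hpos j)
  have hsplit : (∑ i, ∑ j, (B i j * B j i) * ((G i j : ℝ) : ℂ))
      = 2 * ∑ i, ∑ j, (B i j * B j i) * ((F i j : ℝ) : ℂ) := by
    have e1 : (∑ i, ∑ j, (B i j * B j i) * ((G i j : ℝ) : ℂ))
        = (∑ i, ∑ j, (B i j * B j i) * ((F i j : ℝ) : ℂ))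
          + ∑ i, ∑ j, (B i j * B j i) * ((F j i : ℝ) : ℂ) := by
      rw [← Finset.sum_add_distrib]
      refine Finset.sum_congr rfl fun i _ => ?_
      rw [← Finset.sum_add_distrib]
      refine Finset.sum_congr rfl fun j _ => ?_
      rw [← hkey i j]
      push_cast
      ring
    have e2 : (∑ i, ∑ j, (B i j * B j i) * ((F j i : ℝ) : ℂ))
        = ∑ i, ∑ j, (B i j * B j i) * ((F i j : ℝ) : ℂ) := by
      rw [Finset.sum_comm]
      exact Finset.sum_congr rfl fun i _ => Finset.sum_congr rfl fun j _ => by ring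
    rw [e1, e2]
    ring
  rw [hsplit]
  ring
end

section
/- Let ρ be a positive definite Hermitian matrix in Matrix (Fin d) (Fin d) ℂ and let C ∈ Matrix (Fin d) (Fin d) ℂ commute with ρ (C * ρ = ρ * C). Then ∫₀^∞ Tr( C * ρ * (u•1+ρ)⁻¹ * C * ρ * (u•1+ρ)⁻¹ ) du = Tr( C * C * ρ ), where 1 denotes the identity matrix and the integral is over (0, ∞). -/
open Matrix MeasureTheory Filter Topology
open scoped ComplexOrder

/-- Derivative lemma for the scalar integrand. -/
lemma aux_hasDerivAt (l : ℝ) (hl : 0 < l) {x : ℝ} (hx : x ∈ Set.Ici (0:ℝ)) :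
    HasDerivAt (fun u : ℝ => -l^2 * (u + l)⁻¹) (l^2/(x+l)^2) x := by
  have hpos : 0 < x + l := by have := hx.out; linarith
  have h1 : HasDerivAt (fun u : ℝ => u + l) 1 x := (hasDerivAt_id x).add_const l
  have h2 := h1.inv hpos.ne'
  have h3 := h2.const_mul (-l^2)
  rw [show l^2/(x+l)^2 = -l^2 * (-1/(x+l)^2) by ring]
  exact h3

lemma aux_integrable (l : ℝ) (hl : 0 < l) :
    IntegrableOn (fun u : ℝ => l^2/(u+l)^2) (Set.Ioi 0) := by
  apply integrableOn_Ioi_deriv_of_nonneg' (fun x hx => aux_hasDerivAt l hl hx)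
  · intro x hx
    positivity
  · have h0 : Tendsto (fun u : ℝ => (u + l)⁻¹) atTop (𝓝 0) :=
      (tendsto_atTop_add_const_right _ l tendsto_id).inv_tendsto_atTop
    have := h0.const_mul (-l^2)
    simpa using this

lemma aux_integral (l : ℝ) (hl : 0 < l) :
    ∫ u in Set.Ioi (0:ℝ), l^2/(u+l)^2 = l := by
  have h0 : Tendsto (fun u : ℝ => (u + l)⁻¹) atTop (𝓝 0) :=
    (tendsto_atTop_add_const_right _ l tendsto_id).inv_tendsto_atTop
  have hlim : Tendsto (fun u : ℝ => -l^2 * (u + l)⁻¹) atTop (𝓝 0) := by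
    have := h0.const_mul (-l^2); simpa using this
  have := integral_Ioi_of_hasDerivAt_of_nonneg'
    (fun x hx => aux_hasDerivAt l hl hx) (fun x hx => by positivity) hlim
  rw [this]
  field_simp
  ring

/-- For a positive definite Hermitian matrix `ρ` and a matrix `C` commuting with `ρ`,
`∫₀^∞ Tr(Cρ(u•1+ρ)⁻¹Cρ(u•1+ρ)⁻¹) du = Tr(C²ρ)` (integral over `(0,∞)`). -/
theorem trace_integral_commuting (d : ℕ) (ρ C : Matrix (Fin d) (Fin d) ℂ)
    (hρ : ρ.PosDef) (hC : C * ρ = ρ * C) :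
    (∫ u in Set.Ioi (0 : ℝ),
        (C * ρ * (u • (1 : Matrix (Fin d) (Fin d) ℂ) + ρ)⁻¹
          * C * ρ * (u • (1 : Matrix (Fin d) (Fin d) ℂ) + ρ)⁻¹).trace)
      = (C * C * ρ).trace := by
  have hH : ρ.IsHermitian := hρ.1
  set U : Matrix (Fin d) (Fin d) ℂ := (hH.eigenvectorUnitary : Matrix (Fin d) (Fin d) ℂ) with hUdef
  set lam : Fin d → ℝ := hH.eigenvalues with hlamdef
  have hlam : ∀ i, 0 < lam i := hρ.eigenvalues_pos
  have hU1 : star U * U = 1 := Matrix.mem_unitaryGroup_iff'.mp (hH.eigenvectorUnitary).2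
  have hU2 : U * star U = 1 := Matrix.mem_unitaryGroup_iff.mp (hH.eigenvectorUnitary).2
  have hUU : ∀ X : Matrix (Fin d) (Fin d) ℂ, star U * (U * X) = X := by
    intro X; rw [← mul_assoc, hU1, one_mul]
  have hUU' : ∀ X : Matrix (Fin d) (Fin d) ℂ, U * (star U * X) = X := by
    intro X; rw [← mul_assoc, hU2, one_mul]
  set D : Matrix (Fin d) (Fin d) ℂ := diagonal (fun i => (lam i : ℂ)) with hDdef
  have hspec : ρ = U * D * star U := by
    have := hH.spectral_theorem
    rw [Unitary.conjStarAlgAut_apply] at this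
    exact this
  set C' : Matrix (Fin d) (Fin d) ℂ := star U * C * U with hC'def
  have hCC' : C = U * C' * star U := by
    rw [hC'def]
    calc C = (U * star U) * C * (U * star U) := by rw [hU2]; noncomm_ring
    _ = U * (star U * C * U) * star U := by noncomm_ring
  -- C' commutes with D
  have hC'D : C' * D = D * C' := by
    have h1 : C' * D = star U * (C * ρ) * U := by
      rw [hC'def, hspec]
      calc star U * C * U * D
          = star U * C * (U * D * ((star U) * U)) := by rw [hU1]; noncomm_ring
        _ = star U * (C * (U * D * star U)) * U := by noncomm_ring
    have h2 : D * C' = star U * (ρ * C) * U := by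
      rw [hC'def, hspec]
      calc D * (star U * C * U)
          = ((star U) * U) * D * (star U * C * U) := by rw [hU1]; noncomm_ring
        _ = star U * ((U * D * star U) * C) * U := by noncomm_ring
    rw [h1, h2, hC]
  have hkey : ∀ i j, C' i j ≠ 0 → lam i = lam j := by
    intro i j hne
    have := congrFun (congrFun hC'D i) j
    rw [Matrix.mul_diagonal, Matrix.diagonal_mul] at this
    have h2 : ((lam i : ℂ) - lam j) * C' i j = 0 := by
      linear_combination -this
    rcases mul_eq_zero.mp h2 with h | h
    · have : (lam i : ℂ) = lam j := sub_eq_zero.mp h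
      exact_mod_cast this
    · exact absurd h hne
  have hcomm : ∀ f : ℝ → ℂ,
      C' * diagonal (fun i => f (lam i)) = diagonal (fun i => f (lam i)) * C' := by
    intro f
    ext i j
    rw [Matrix.mul_diagonal, Matrix.diagonal_mul]
    by_cases h : C' i j = 0
    · simp [h]
    · rw [hkey i j h]; ring
  -- pointwise computation of the trace
  have htr : ∀ u ∈ Set.Ioi (0:ℝ),
      (C * ρ * (u • (1 : Matrix (Fin d) (Fin d) ℂ) + ρ)⁻¹
          * C * ρ * (u • (1 : Matrix (Fin d) (Fin d) ℂ) + ρ)⁻¹).trace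
        = ∑ i, (C' * C') i i * (((lam i)^2/((u + lam i)^2) : ℝ) : ℂ) := by
    intro u hu
    have hu0 : 0 < u := hu
    have hne : ∀ i, (u : ℂ) + lam i ≠ 0 := by
      intro i
      have : ((u + lam i : ℝ) : ℂ) ≠ 0 := by
        exact_mod_cast (by have := hlam i; positivity : (0:ℝ) < u + lam i).ne'
      simpa [Complex.ofReal_add] using this
    have hsmul : u • (1 : Matrix (Fin d) (Fin d) ℂ) = diagonal (fun _ => (u:ℂ)) := by
      ext i j
      by_cases h : i = j <;>
        simp [Matrix.smul_apply, Matrix.one_apply, Matrix.diagonal_apply, h,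
          Complex.real_smul]
    have hA : u • (1 : Matrix (Fin d) (Fin d) ℂ) + ρ
        = U * diagonal (fun i => (u:ℂ) + lam i) * star U := by
      rw [hsmul, hspec]
      have : diagonal (fun i : Fin d => (u:ℂ) + lam i)
          = diagonal (fun _ : Fin d => (u:ℂ)) + D := by
        rw [hDdef, Matrix.diagonal_add]
      rw [this, Matrix.mul_add, Matrix.add_mul]
      congr 1
      rw [← Matrix.smul_one_eq_diagonal, Matrix.mul_smul, Matrix.smul_mul, mul_one, hU2]
    set E : Matrix (Fin d) (Fin d) ℂ := diagonal (fun i => ((u:ℂ) + lam i)⁻¹) with hEdef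
    have hAinv : (u • (1 : Matrix (Fin d) (Fin d) ℂ) + ρ)⁻¹ = U * E * star U := by
      apply Matrix.inv_eq_right_inv
      rw [hA, hEdef]
      calc U * diagonal (fun i => (u:ℂ) + lam i) * star U *
            (U * diagonal (fun i => ((u:ℂ) + lam i)⁻¹) * star U)
          = U * (diagonal (fun i => (u:ℂ) + lam i) *
              (star U * (U * (diagonal (fun i => ((u:ℂ) + lam i)⁻¹) * star U)))) := by
            simp only [mul_assoc]
        _ = U * (diagonal (fun i => (u:ℂ) + lam i) *
              diagonal (fun i => ((u:ℂ) + lam i)⁻¹)) * star U := by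
            rw [hUU]; simp only [mul_assoc]
        _ = U * (1 : Matrix (Fin d) (Fin d) ℂ) * star U := by
            rw [Matrix.diagonal_mul_diagonal]
            have h1 : (fun i => ((u:ℂ) + lam i) * ((u:ℂ) + lam i)⁻¹)
                = fun _ : Fin d => (1:ℂ) := funext fun i => mul_inv_cancel₀ (hne i)
            rw [h1, Matrix.diagonal_one]
        _ = 1 := by rw [mul_one, hU2]
    set G : Matrix (Fin d) (Fin d) ℂ := diagonal (fun i => (lam i : ℂ) * ((u:ℂ) + lam i)⁻¹)
      with hGdef
    have hDE : D * E = G := by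
      rw [hDdef, hEdef, hGdef, Matrix.diagonal_mul_diagonal]
    have hmat : C * ρ * (u • (1 : Matrix (Fin d) (Fin d) ℂ) + ρ)⁻¹
          * C * ρ * (u • (1 : Matrix (Fin d) (Fin d) ℂ) + ρ)⁻¹
        = U * (C' * G * (C' * G)) * star U := by
      rw [hAinv, hspec, hCC', ← hDE]
      simp only [mul_assoc, hUU, hUU']
    rw [hmat, Matrix.trace_mul_cycle, ← mul_assoc, hU1, one_mul]
    have hCG : C' * G = G * C' := by
      rw [hGdef]
      exact hcomm (fun t => (t : ℂ) * ((u:ℂ) + t)⁻¹)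
    have : C' * G * (C' * G) = C' * C' * (G * G) := by
      calc C' * G * (C' * G) = C' * (G * C') * G := by noncomm_ring
        _ = C' * (C' * G) * G := by rw [hCG]
        _ = C' * C' * (G * G) := by noncomm_ring
    rw [this, hGdef, Matrix.diagonal_mul_diagonal]
    rw [Matrix.trace]
    apply Finset.sum_congr rfl
    intro i _
    rw [Matrix.diag_apply, Matrix.mul_diagonal]
    congr 1
    push_cast
    have := hne i
    field_simp
  rw [setIntegral_congr_fun measurableSet_Ioi htr]
  have hint : ∀ i : Fin d, IntegrableOn
      (fun u : ℝ => (C' * C') i i * (((lam i)^2/((u + lam i)^2) : ℝ) : ℂ))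
      (Set.Ioi (0:ℝ)) := by
    intro i
    exact ((aux_integrable (lam i) (hlam i)).ofReal.const_mul _)
  rw [integral_finset_sum _ (fun i _ => hint i)]
  have hterm : ∀ i : Fin d,
      (∫ u in Set.Ioi (0:ℝ), (C' * C') i i * (((lam i)^2/((u + lam i)^2) : ℝ) : ℂ))
        = (C' * C') i i * (lam i : ℂ) := by
    intro i
    rw [integral_const_mul]
    congr 1
    have hcast : ∫ u in Set.Ioi (0:ℝ), (((lam i)^2/((u + lam i)^2) : ℝ) : ℂ)
        = ((∫ u in Set.Ioi (0:ℝ), (lam i)^2/((u + lam i)^2) : ℝ) : ℂ) := integral_ofReal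
    rw [hcast, aux_integral (lam i) (hlam i)]
  simp only [hterm]
  -- final algebraic identity
  have hfin : ∑ i, (C' * C') i i * (lam i : ℂ) = (C' * C' * D).trace := by
    rw [Matrix.trace]
    apply Finset.sum_congr rfl
    intro i _
    rw [Matrix.diag_apply, Matrix.mul_diagonal]
  rw [hfin]
  have : C' * C' * D = star U * (C * C * ρ) * U := by
    rw [hC'def, hspec]
    simp only [mul_assoc, hUU, hUU', hU1, mul_one]
  rw [this, Matrix.trace_mul_cycle, ← mul_assoc, hU2, one_mul]
end
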